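/- arXiv:1603.08370 — 3 statements merged into one kernel-verified Lean document; each statement's English description precedes it below -/
import Mathlib

section
/- For every signed graph (G,Σ), arccos(ℰ(G,Σ))/π ⊆ MET(G,Σ); that is, if the signed PSD completion problem P(G,Σ,c) is feasible for c ∈ [−1,1]^E, then arccos(c)/π satisfies all odd-cycle inequalities of MET(G,Σ). -/
/-! ## Signed graphs (multigraphs with signed edges) -/

structure SignedGraph where
  V : Type
  E : Type
  fV : Fintype V
  dV : DecidableEq V
  fE : Fintype E
  dE : DecidableEq E
  ends : E → Sym2 V
  odd : E → Prop

attribute [instance] SignedGraph.fV SignedGraph.dV SignedGraph.fE SignedGraph.dE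

open Classical in
/-- The sign `σ(e)` of an edge: `-1` if odd, `+1` if even. -/
noncomputable def SignedGraph.sgn (G : SignedGraph) (e : G.E) : ℝ :=
  if G.odd e then -1 else 1

/-- `c` is nondegenerate: `c(e) ≠ σ(e)` for every edge. -/
def SignedGraph.NondegWeights (G : SignedGraph) (c : G.E → ℝ) : Prop :=
  ∀ e, (G.odd e → c e ≠ -1) ∧ (¬ G.odd e → c e ≠ 1)

/-- The vector `arccos(c)/π`. -/
noncomputable def SignedGraph.metric (G : SignedGraph) (c : G.E → ℝ) : G.E → ℝ :=
  fun e => Real.arccos (c e) / Real.pi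

/-! ## Cycles and paths -/

/-- A cycle of length `k+1` in a signed multigraph. -/
structure GCycle (G : SignedGraph) where
  k : ℕ
  vtx : Fin (k + 1) → G.V
  edge : Fin (k + 1) → G.E
  vtx_inj : Function.Injective vtx
  edge_inj : Function.Injective edge
  incid : ∀ i, G.ends (edge i) = s(vtx i, vtx (i + 1))

namespace GCycle

variable {G : SignedGraph}

def len (C : GCycle G) : ℕ := C.k + 1

def vertexSet (C : GCycle G) : Set G.V := Set.range C.vtx

def edgeSet (C : GCycle G) : Set G.E := Set.range C.edge

/-- The number of odd edges of the cycle, i.e. `|E(C) ∩ Σ|`. -/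
noncomputable def oddCount (C : GCycle G) : ℕ := Nat.card {i : Fin (C.k + 1) // G.odd (C.edge i)}

/-- An odd cycle: odd number of odd edges. -/
def IsOdd (C : GCycle G) : Prop := Odd C.oddCount

open Classical in
/-- `val(C,x) = Σ_{e ∈ E(C)∖Σ} x(e) + Σ_{e ∈ E(C)∩Σ} (1 - x(e))`. -/
noncomputable def val (C : GCycle G) (x : G.E → ℝ) : ℝ :=
  ∑ i, if G.odd (C.edge i) then 1 - x (C.edge i) else x (C.edge i)

end GCycle

/-- A path of length `len` in a signed multigraph. -/
structure GPath (G : SignedGraph) where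
  len : ℕ
  vtx : Fin (len + 1) → G.V
  edge : Fin len → G.E
  vtx_inj : Function.Injective vtx
  edge_inj : Function.Injective edge
  incid : ∀ i : Fin len, G.ends (edge i) = s(vtx i.castSucc, vtx i.succ)

namespace GPath

variable {G : SignedGraph}

def first (P : GPath G) : G.V := P.vtx 0

def last (P : GPath G) : G.V := P.vtx (Fin.last P.len)

def vertexSet (P : GPath G) : Set G.V := Set.range P.vtx

def edgeSet (P : GPath G) : Set G.E := Set.range P.edge

/-- The internal vertices of the path. -/
def inner (P : GPath G) : Set G.V :=
  {w | ∃ i : Fin (P.len + 1), P.vtx i = w ∧ i ≠ 0 ∧ i ≠ Fin.last P.len}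

noncomputable def oddCount (P : GPath G) : ℕ := Nat.card {i : Fin P.len // G.odd (P.edge i)}

/-- An odd path: odd number of odd edges. -/
def IsOdd (P : GPath G) : Prop := Odd P.oddCount

end GPath

/-- Two paths are internally disjoint: edge-disjoint, and every common vertex
is an endvertex of both. -/
def InternallyDisjoint {G : SignedGraph} (P Q : GPath G) : Prop :=
  Disjoint P.edgeSet Q.edgeSet ∧
  ∀ w, w ∈ P.vertexSet → w ∈ Q.vertexSet →
    (w = P.first ∨ w = P.last) ∧ (w = Q.first ∨ w = Q.last)

/-! ## The signed metric polytope, tightness -/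

/-- `x ∈ MET(G,Σ)`. -/
def InMET (G : SignedGraph) (x : G.E → ℝ) : Prop :=
  (∀ e, x e ∈ Set.Icc (0 : ℝ) 1) ∧
  ∀ C : GCycle G, C.IsOdd →
    1 - (C.oddCount : ℝ) ≤ ∑ i, G.sgn (C.edge i) * x (C.edge i)

/-- A tight odd cycle with respect to `c`: `val(C, arccos(c)/π) = 1`. -/
def IsTight (G : SignedGraph) (c : G.E → ℝ) (C : GCycle G) : Prop :=
  C.IsOdd ∧ C.val (G.metric c) = 1

/-- A tight edge: lies on some tight odd cycle. -/
def TightEdge (G : SignedGraph) (c : G.E → ℝ) (e : G.E) : Prop :=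
  ∃ C : GCycle G, IsTight G c C ∧ e ∈ C.edgeSet

/-- A strictly tight edge: lies on a tight odd cycle of length at least three. -/
def StrictlyTight (G : SignedGraph) (c : G.E → ℝ) (e : G.E) : Prop :=
  ∃ C : GCycle G, IsTight G c C ∧ 3 ≤ C.len ∧ e ∈ C.edgeSet

/-- A degenerate edge: `c(e) = σ(e)`. -/
def DegenerateEdge (G : SignedGraph) (c : G.E → ℝ) (e : G.E) : Prop :=
  (G.odd e ∧ c e = -1) ∨ (¬ G.odd e ∧ c e = 1)

/-! ## The signed PSD matrix completion problem and its dual -/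

/-- Feasibility of `P(G,Σ,c)` with the edge constraints restricted to `Es`. -/
def IsFeasibleE (G : SignedGraph) (Es : Set G.E) (c : G.E → ℝ)
    (X : Matrix G.V G.V ℝ) : Prop :=
  X.PosSemidef ∧ (∀ i, X i i = 1) ∧
  ∀ e ∈ Es, ∀ u v : G.V, G.ends e = s(u, v) →
    (G.odd e → X u v ≤ c e) ∧ (¬ G.odd e → c e ≤ X u v)

/-- Feasibility of the signed PSD completion problem `P(G,Σ,c)`. -/
def IsFeasible (G : SignedGraph) (c : G.E → ℝ) (X : Matrix G.V G.V ℝ) : Prop :=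
  IsFeasibleE G Set.univ c X

/-- The symmetric matrix `E_ij = (e_i e_jᵀ + e_j e_iᵀ)/2` attached to an unordered pair. -/
noncomputable def symPairMat {V : Type} [Fintype V] [DecidableEq V] (p : Sym2 V) :
    Matrix V V ℝ :=
  Sym2.lift ⟨fun u v => (1 / 2 : ℝ) • (Matrix.single u v 1 + Matrix.single v u 1),
    fun u v => by simp [add_comm]⟩ p

/-- The matrix `Ω = Σ_i ω(i) E_ii + Σ_e ω(e) E_e` of a dual vector `ω ∈ ℝ^{V ∪ E}`. -/
noncomputable def DualMat (G : SignedGraph) (ωV : G.V → ℝ) (ωE : G.E → ℝ) :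
    Matrix G.V G.V ℝ :=
  Matrix.diagonal ωV + ∑ e, ωE e • symPairMat (G.ends e)

/-- A dual solution of `P(G,Σ,c)`. -/
def IsDualSol (G : SignedGraph) (ωV : G.V → ℝ) (ωE : G.E → ℝ) : Prop :=
  (∀ e, ¬ G.odd e → ωE e ≤ 0) ∧ (∀ e, G.odd e → 0 ≤ ωE e) ∧
  (DualMat G ωV ωE).PosSemidef

/-- The strict complementarity condition (edge constraints restricted to `Es`). -/
def StrictCompE (G : SignedGraph) (Es : Set G.E) (c : G.E → ℝ) (X : Matrix G.V G.V ℝ)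
    (ωV : G.V → ℝ) (ωE : G.E → ℝ) : Prop :=
  (X * DualMat G ωV ωE).trace = 0 ∧
  (∀ e ∈ Es, ∀ u v : G.V, G.ends e = s(u, v) → (X u v - c e) * ωE e = 0) ∧
  X.rank + (DualMat G ωV ωE).rank = Fintype.card G.V

/-- The strict complementarity condition for `P(G,Σ,c)`. -/
def StrictComp (G : SignedGraph) (c : G.E → ℝ) (X : Matrix G.V G.V ℝ)
    (ωV : G.V → ℝ) (ωE : G.E → ℝ) : Prop :=
  StrictCompE G Set.univ c X ωV ωE

/-- A maximum-rank feasible solution (edge constraints restricted to `Es`). -/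
def IsMaxRankSolE (G : SignedGraph) (Es : Set G.E) (c : G.E → ℝ)
    (X : Matrix G.V G.V ℝ) : Prop :=
  IsFeasibleE G Es c X ∧ ∀ Y, IsFeasibleE G Es c Y → Y.rank ≤ X.rank

/-- A maximum-rank feasible solution of `P(G,Σ,c)`. -/
def IsMaxRankSol (G : SignedGraph) (c : G.E → ℝ) (X : Matrix G.V G.V ℝ) : Prop :=
  IsMaxRankSolE G Set.univ c X

/-- A nice dual solution: a dual solution satisfying the strict complementarity
condition with some (equivalently, any) maximum-rank feasible solution. -/
def IsNiceDual (G : SignedGraph) (c : G.E → ℝ) (ωV : G.V → ℝ) (ωE : G.E → ℝ) : Prop :=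
  IsDualSol G ωV ωE ∧ ∃ X, IsMaxRankSol G c X ∧ StrictComp G c X ωV ωE

/-! ## Resigning, minors -/

/-- The edge `e` lies on the cut `δ(S)`. -/
def Crosses (G : SignedGraph) (S : Set G.V) (e : G.E) : Prop :=
  ∃ u v, G.ends e = s(u, v) ∧ ((u ∈ S) ↔ (v ∉ S))

/-- `H` is (up to relabeling) obtained from `G` by resigning on a vertex set. -/
def IsResign (G H : SignedGraph) : Prop :=
  ∃ (S : Set G.V) (fV : G.V ≃ H.V) (fE : G.E ≃ H.E),
    (∀ e, H.ends (fE e) = (G.ends e).map fV) ∧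
    (∀ e, H.odd (fE e) ↔ Xor' (G.odd e) (Crosses G S e))

/-- `H` is (up to relabeling) obtained from `G` by deleting edges. -/
def IsEdgeDeletion (G H : SignedGraph) : Prop :=
  ∃ (fV : G.V ≃ H.V) (fE : H.E ↪ G.E),
    (∀ e, H.ends e = (G.ends (fE e)).map fV) ∧
    (∀ e, H.odd e ↔ G.odd (fE e))

/-- `H` is (up to relabeling) obtained from `G` by contracting an even edge. -/
def IsContraction (G H : SignedGraph) : Prop :=
  ∃ (e₀ : G.E) (u v : G.V), u ≠ v ∧ G.ends e₀ = s(u, v) ∧ ¬ G.odd e₀ ∧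
    ∃ (f : G.V → H.V) (fE : {e : G.E // e ≠ e₀} ≃ H.E),
      Function.Surjective f ∧
      (∀ a b, f a = f b ↔ (a = b ∨ (a = u ∧ b = v) ∨ (a = v ∧ b = u))) ∧
      (∀ e : {e : G.E // e ≠ e₀}, H.ends (fE e) = (G.ends e.1).map f) ∧
      (∀ e : {e : G.E // e ≠ e₀}, H.odd (fE e) ↔ G.odd e.1)

def MinorStep (G H : SignedGraph) : Prop :=
  IsEdgeDeletion G H ∨ IsResign G H ∨ IsContraction G H

/-- `H` is a minor of `G`. -/
def HasAsMinor (G H : SignedGraph) : Prop := Relation.ReflTransGen MinorStep G H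

/-- Sign equivalence: related by a series of resignings. -/
def SignEquiv (G H : SignedGraph) : Prop := Relation.ReflTransGen IsResign G H

/-- `H` is the odd-`K₄`: `K₄` with all six edges odd. -/
def IsOddK4 (H : SignedGraph) : Prop :=
  Fintype.card H.V = 4 ∧ Fintype.card H.E = 6 ∧ (∀ e, H.odd e) ∧
  (∀ e, ¬ (H.ends e).IsDiag) ∧ ∀ u v : H.V, u ≠ v → ∃ e, H.ends e = s(u, v)

/-- `H` is the odd-`K₃²`: the triangle with every edge doubled into an odd/even
parallel pair. -/
def IsOddK3sq (H : SignedGraph) : Prop :=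
  Fintype.card H.V = 3 ∧ Fintype.card H.E = 6 ∧ (∀ e, ¬ (H.ends e).IsDiag) ∧
  ∀ u v : H.V, u ≠ v →
    (∃ e, H.ends e = s(u, v) ∧ H.odd e) ∧ (∃ e, H.ends e = s(u, v) ∧ ¬ H.odd e)

def OddK4Free (G : SignedGraph) : Prop := ¬ ∃ H, HasAsMinor G H ∧ IsOddK4 H

def OddK3sqFree (G : SignedGraph) : Prop := ¬ ∃ H, HasAsMinor G H ∧ IsOddK3sq H

/-- 2-connectivity: removing any vertex leaves the rest connected. -/
def TwoConnected (G : SignedGraph) : Prop :=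
  ∀ w u v : G.V, u ≠ w → v ≠ w →
    ∃ P : GPath G, P.first = u ∧ P.last = v ∧ ∀ i, P.vtx i ≠ w

/-! ## The hypergraph `ℋ(𝒞)` -/

def blockUnion {G : SignedGraph} (B : Set (GCycle G)) : Set G.V :=
  ⋃ C ∈ B, C.vertexSet

/-- A partition of the cycle family `𝒞` such that the vertex-set unions of
distinct blocks share at most one vertex. -/
def IsValidPartition (G : SignedGraph) (𝒞 : Set (GCycle G))
    (P : Set (Set (GCycle G))) : Prop :=
  (∀ B ∈ P, B.Nonempty) ∧ (∀ B ∈ P, B ⊆ 𝒞) ∧ (∀ C ∈ 𝒞, ∃ B ∈ P, C ∈ B) ∧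
  (∀ B ∈ P, ∀ B' ∈ P, B ≠ B' → Disjoint B B') ∧
  (∀ B ∈ P, ∀ B' ∈ P, B ≠ B' → (blockUnion B ∩ blockUnion B').Subsingleton)

/-- `ℰ` is the hyperedge family of `ℋ(𝒞)`: the block unions of the finest valid
partition of `𝒞`. -/
def IsHypergraphOf (G : SignedGraph) (𝒞 : Set (GCycle G)) (ℰ : Set (Set G.V)) : Prop :=
  ∃ P, IsValidPartition G 𝒞 P ∧
    (∀ Q, IsValidPartition G 𝒞 Q → ∀ B ∈ P, ∃ B' ∈ Q, B ⊆ B') ∧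
    ℰ = blockUnion '' P

/-- A hypergraph (given by its hyperedge family) is acyclic: its vertex-hyperedge
incidence bipartite graph has no cycle. -/
def HypAcyclic {V : Type} (ℰ : Set (Set V)) : Prop :=
  ¬ ∃ (k : ℕ) (v : Fin (k + 2) → V) (Ed : Fin (k + 2) → Set V),
      Function.Injective v ∧ Function.Injective Ed ∧ (∀ i, Ed i ∈ ℰ) ∧
      ∀ i, v i ∈ Ed i ∧ v (i + 1) ∈ Ed i

/-- A hypergraph forms a triangle: no isolated vertex, and exactly three
hyperedges pairwise intersecting in exactly one vertex. -/
def HypTriangle {V : Type} (ℰ : Set (Set V)) : Prop :=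
  (∀ x : V, ∃ s ∈ ℰ, x ∈ s) ∧
  ∃ s₁ s₂ s₃ : Set V, s₁ ≠ s₂ ∧ s₁ ≠ s₃ ∧ s₂ ≠ s₃ ∧ ℰ = {s₁, s₂, s₃} ∧
    (∃ x, s₁ ∩ s₂ = {x}) ∧ (∃ x, s₁ ∩ s₃ = {x}) ∧ (∃ x, s₂ ∩ s₃ = {x})

/-! ## Reduction of a weighted instance to a nondegenerate one -/

open Classical in
/-- The edge weight obtained from `c` after resigning on `S`. -/
noncomputable def resignVal (G : SignedGraph) (S : Set G.V) (c : G.E → ℝ) (e : G.E) : ℝ :=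
  if Crosses G S e then -c e else c e

/-- Resigning a weighted signed graph. -/
def CResignRel (G : SignedGraph) (c : G.E → ℝ) (H : SignedGraph) (c' : H.E → ℝ) : Prop :=
  ∃ (S : Set G.V) (fV : G.V ≃ H.V) (fE : G.E ≃ H.E),
    (∀ e, H.ends (fE e) = (G.ends e).map fV) ∧
    (∀ e, H.odd (fE e) ↔ Xor' (G.odd e) (Crosses G S e)) ∧
    (∀ e, c' (fE e) = resignVal G S c e)

/-- Contracting an even edge `e₀` with `c(e₀) = 1` in a weighted signed graph. -/
def CContractRel (G : SignedGraph) (c : G.E → ℝ) (H : SignedGraph) (c' : H.E → ℝ) : Prop :=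
  ∃ (e₀ : G.E) (u v : G.V), u ≠ v ∧ G.ends e₀ = s(u, v) ∧ ¬ G.odd e₀ ∧ c e₀ = 1 ∧
    ∃ (f : G.V → H.V) (fE : {e : G.E // e ≠ e₀} ≃ H.E),
      Function.Surjective f ∧
      (∀ a b, f a = f b ↔ (a = b ∨ (a = u ∧ b = v) ∨ (a = v ∧ b = u))) ∧
      (∀ e : {e : G.E // e ≠ e₀}, H.ends (fE e) = (G.ends e.1).map f) ∧
      (∀ e : {e : G.E // e ≠ e₀}, H.odd (fE e) ↔ G.odd e.1) ∧
      (∀ e : {e : G.E // e ≠ e₀}, c' (fE e) = c e.1)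

/-- A weighted signed graph instance. -/
def WInst : Type 1 := Σ G : SignedGraph, (G.E → ℝ)

/-- The reduction relation on weighted instances: a sequence of resignings and
contractions of even edges of weight `1`. -/
def ReducesTo (A B : WInst) : Prop :=
  Relation.ReflTransGen
    (fun X Y => CResignRel X.1 X.2 Y.1 Y.2 ∨ CContractRel X.1 X.2 Y.1 Y.2) A B

/-! ## Subproblems on subgraphs (for the gluing lemma) -/

/-- Feasibility of the completion problem of the subgraph with vertices `Vs` and
edges `Es`. -/
def IsFeasibleOn (G : SignedGraph) (Vs : Finset G.V) (Es : Finset G.E) (c : G.E → ℝ)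
    (X : Matrix ↥Vs ↥Vs ℝ) : Prop :=
  X.PosSemidef ∧ (∀ i, X i i = 1) ∧
  ∀ e ∈ Es, ∀ u v : ↥Vs, G.ends e = s(u.1, v.1) →
    (G.odd e → X u v ≤ c e) ∧ (¬ G.odd e → c e ≤ X u v)

/-- A dual solution of the subgraph problem, recorded as an ambient dual vector
supported on `Vs ∪ Es` (i.e. the dual matrix is padded with zero rows/columns). -/
def IsDualSolOn (G : SignedGraph) (Vs : Finset G.V) (Es : Finset G.E)
    (ωV : G.V → ℝ) (ωE : G.E → ℝ) : Prop :=
  (∀ v, v ∉ Vs → ωV v = 0) ∧ (∀ e, e ∉ Es → ωE e = 0) ∧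
  (∀ e ∈ Es, ¬ G.odd e → ωE e ≤ 0) ∧ (∀ e ∈ Es, G.odd e → 0 ≤ ωE e) ∧
  (DualMat G ωV ωE).PosSemidef

/-- The strict complementarity condition for the subgraph problem. -/
def StrictCompOn (G : SignedGraph) (Vs : Finset G.V) (Es : Finset G.E) (c : G.E → ℝ)
    (X : Matrix ↥Vs ↥Vs ℝ) (ωV : G.V → ℝ) (ωE : G.E → ℝ) : Prop :=
  (X * (DualMat G ωV ωE).submatrix (Subtype.val : ↥Vs → G.V) Subtype.val).trace = 0 ∧
  (∀ e ∈ Es, ∀ u v : ↥Vs, G.ends e = s(u.1, v.1) → (X u v - c e) * ωE e = 0) ∧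
  X.rank + (DualMat G ωV ωE).rank = Vs.card

/-! ## Fans, ladders, rooted odd-K₄⁻ minors -/

/-- The edge set `F` forms a subdivision of a fan: a hub `z`, rim vertices `w`,
subdivided spokes `Sp i` from `z` to `w i` and subdivided rim edges `R i` from
`w i` to `w (i+1)`, all internally disjoint. -/
def IsFanSubdivision (G : SignedGraph) (F : Set G.E) : Prop :=
  ∃ (m : ℕ) (z : G.V) (w : Fin (m + 1) → G.V)
    (Sp : Fin (m + 1) → GPath G) (R : Fin m → GPath G),
    Function.Injective w ∧ (∀ i, w i ≠ z) ∧
    (∀ i, (Sp i).first = z ∧ (Sp i).last = w i ∧ 1 ≤ (Sp i).len) ∧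
    (∀ i : Fin m, (R i).first = w i.castSucc ∧ (R i).last = w i.succ ∧ 1 ≤ (R i).len) ∧
    (∀ i j, i ≠ j → InternallyDisjoint (Sp i) (Sp j)) ∧
    (∀ i j, i ≠ j → InternallyDisjoint (R i) (R j)) ∧
    (∀ i j, InternallyDisjoint (Sp i) (R j)) ∧
    F = (⋃ i, (Sp i).edgeSet) ∪ (⋃ i, (R i).edgeSet)

/-- A tight odd ladder with respect to `c`. -/
structure TightOddLadder (G : SignedGraph) (c : G.E → ℝ) where
  k : ℕ
  cyc : Fin (k + 1) → GCycle G
  tight : ∀ i, IsTight G c (cyc i)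
  distinct : ∀ i j, i ≠ j → (cyc i).edgeSet ≠ (cyc j).edgeSet
  consec : ∀ i : Fin k, ∃ P : GPath G, 1 ≤ P.len ∧
      P.edgeSet = (cyc i.castSucc).edgeSet ∩ (cyc i.succ).edgeSet ∧
      P.vertexSet = (cyc i.castSucc).vertexSet ∩ (cyc i.succ).vertexSet
  fan : ∀ i j : Fin (k + 1), i ≤ j →
      ((cyc i).vertexSet ∩ (cyc j).vertexSet).Nonempty →
      IsFanSubdivision G (⋃ ℓ ∈ Finset.Icc i j, (cyc ℓ).edgeSet)

namespace TightOddLadder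

variable {G : SignedGraph} {c : G.E → ℝ}

def edgeSet (L : TightOddLadder G c) : Set G.E := ⋃ i, (L.cyc i).edgeSet

def vertexSet (L : TightOddLadder G c) : Set G.V := ⋃ i, (L.cyc i).vertexSet

/-- The ladder is rooted at the pair of vertices `{u, v}`. -/
def RootedVV (L : TightOddLadder G c) (u v : G.V) : Prop :=
  u ∈ (L.cyc 0).vertexSet ∧ (∀ i, i ≠ 0 → u ∉ (L.cyc i).vertexSet) ∧
  v ∈ (L.cyc (Fin.last L.k)).vertexSet ∧
  ∀ i, i ≠ Fin.last L.k → v ∉ (L.cyc i).vertexSet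

/-- The ladder is rooted at the pair `{e, v}` of an edge and a vertex. -/
def RootedEV (L : TightOddLadder G c) (e : G.E) (v : G.V) : Prop :=
  e ∈ (L.cyc 0).edgeSet ∧ (∀ i, i ≠ 0 → e ∉ (L.cyc i).edgeSet) ∧
  v ∈ (L.cyc (Fin.last L.k)).vertexSet ∧
  ∀ i, i ≠ Fin.last L.k → v ∉ (L.cyc i).vertexSet

end TightOddLadder

/-- There is an odd cycle through `u` and `v` inside the subgraph induced by `s`. -/
def HasOddCycleThroughIn (G : SignedGraph) (s : Set G.V) (u v : G.V) : Prop :=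
  ∃ C : GCycle G, C.IsOdd ∧ C.vertexSet ⊆ s ∧ u ∈ C.vertexSet ∧ v ∈ C.vertexSet

/-- The subgraph induced by `s` has an odd-K₄⁻ minor rooted at `{u,v}`: five
internally disjoint paths joining two branch vertices `a, b` and the roots `u, v`
such that the cycle through `a,b,u` and the cycle through `a,b,v` are both odd. -/
def HasRootedOddK4MinusIn (G : SignedGraph) (s : Set G.V) (u v : G.V) : Prop :=
  ∃ (a b : G.V) (P₁ P₂ P₃ P₄ P₅ : GPath G),
    a ≠ b ∧ a ≠ u ∧ a ≠ v ∧ b ≠ u ∧ b ≠ v ∧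
    P₁.first = a ∧ P₁.last = u ∧ P₂.first = u ∧ P₂.last = b ∧
    P₃.first = a ∧ P₃.last = v ∧ P₄.first = v ∧ P₄.last = b ∧
    P₅.first = a ∧ P₅.last = b ∧
    (1 ≤ P₁.len ∧ 1 ≤ P₂.len ∧ 1 ≤ P₃.len ∧ 1 ≤ P₄.len ∧ 1 ≤ P₅.len) ∧
    (InternallyDisjoint P₁ P₂ ∧ InternallyDisjoint P₁ P₃ ∧ InternallyDisjoint P₁ P₄ ∧
     InternallyDisjoint P₁ P₅ ∧ InternallyDisjoint P₂ P₃ ∧ InternallyDisjoint P₂ P₄ ∧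
     InternallyDisjoint P₂ P₅ ∧ InternallyDisjoint P₃ P₄ ∧ InternallyDisjoint P₃ P₅ ∧
     InternallyDisjoint P₄ P₅) ∧
    (P₁.vertexSet ⊆ s ∧ P₂.vertexSet ⊆ s ∧ P₃.vertexSet ⊆ s ∧ P₄.vertexSet ⊆ s ∧
     P₅.vertexSet ⊆ s) ∧
    Odd (P₁.oddCount + P₂.oddCount + P₅.oddCount) ∧
    Odd (P₃.oddCount + P₄.oddCount + P₅.oddCount)

/-- A decomposition of a cycle `C` through `u` and `v` into two `u`-`v` paths. -/
def CycleDecomp {G : SignedGraph} (C : GCycle G) (u v : G.V) (P Q : GPath G) : Prop :=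
  P.first = u ∧ P.last = v ∧ Q.first = u ∧ Q.last = v ∧ 1 ≤ P.len ∧ 1 ≤ Q.len ∧
  Disjoint P.edgeSet Q.edgeSet ∧ P.edgeSet ∪ Q.edgeSet = C.edgeSet ∧
  P.vertexSet ∪ Q.vertexSet = C.vertexSet

/-! ## Path reduction -/

/-- `(H, c')` is the path-reduction of `(G, c)` through the path `P`: after a
resigning making all edges of `P` even, the internal vertices of `P` are removed
(together with all edges incident to them) and a new even edge joining the two
endvertices of `P` is inserted, with
`arccos c'(uv) = Σ_{e ∈ E(P)} arccos(c(e))` (for the resigned weights). -/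
def IsPathReduction (G : SignedGraph) (c : G.E → ℝ) (P : GPath G)
    (H : SignedGraph) (c' : H.E → ℝ) : Prop :=
  ∃ S : Set G.V,
    (∀ i : Fin P.len, ¬ Xor' (G.odd (P.edge i)) (Crosses G S (P.edge i))) ∧
    ∃ (fV : {w : G.V // w ∉ P.inner} ≃ H.V)
      (fE : ({e : G.E // ∀ w ∈ G.ends e, w ∉ P.inner} ⊕ Unit) ≃ H.E),
      (∀ (e : {e : G.E // ∀ w ∈ G.ends e, w ∉ P.inner}) (a b : G.V)
          (ha : a ∉ P.inner) (hb : b ∉ P.inner), G.ends e.1 = s(a, b) →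
          H.ends (fE (Sum.inl e)) = s(fV ⟨a, ha⟩, fV ⟨b, hb⟩)) ∧
      (∀ e, H.odd (fE (Sum.inl e)) ↔ Xor' (G.odd e.1) (Crosses G S e.1)) ∧
      (∀ e, c' (fE (Sum.inl e)) = resignVal G S c e.1) ∧
      (∀ (hu : P.first ∉ P.inner) (hv : P.last ∉ P.inner),
          H.ends (fE (Sum.inr ())) = s(fV ⟨P.first, hu⟩, fV ⟨P.last, hv⟩)) ∧
      ¬ H.odd (fE (Sum.inr ())) ∧
      Real.arccos (c' (fE (Sum.inr ()))) = ∑ i, Real.arccos (resignVal G S c (P.edge i))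

/-! ## Spherical tensegrities -/

/-- The Gram matrix of a spherical configuration. -/
noncomputable def gramMat (G : SignedGraph) {n : ℕ}
    (p : G.V → EuclideanSpace ℝ (Fin n)) : Matrix G.V G.V ℝ :=
  Matrix.of fun u v => (inner ℝ (p u) (p v) : ℝ)

/-- Universal rigidity of the spherical tensegrity `(G, Σ, p)`: the Gram matrix of
`p` is the unique solution of `P(G, Σ, c)` where `c(ij) = p(i)·p(j)`. -/
def UniversallyRigid (G : SignedGraph) {n : ℕ}
    (p : G.V → EuclideanSpace ℝ (Fin n)) (c : G.E → ℝ) : Prop :=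
  IsFeasible G c (gramMat G p) ∧ ∀ X, IsFeasible G c X → X = gramMat G p

/-- Super stability of a spherical tensegrity in `𝕊^{n-1}`. -/
def SuperStable (G : SignedGraph) {n : ℕ}
    (p : G.V → EuclideanSpace ℝ (Fin n)) (c : G.E → ℝ) : Prop :=
  ∃ (ωV : G.V → ℝ) (ωE : G.E → ℝ),
    IsDualSol G ωV ωE ∧
    (gramMat G p * DualMat G ωV ωE).trace = 0 ∧
    (∀ e, ∀ u v : G.V, G.ends e = s(u, v) → ((inner ℝ (p u) (p v) : ℝ) - c e) * ωE e = 0) ∧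
    (DualMat G ωV ωE).rank + n = Fintype.card G.V ∧
    ∀ S : Matrix (Fin n) (Fin n) ℝ, S.IsSymm →
      (∀ w : G.V, ∑ i, ∑ j, p w i * S i j * p w j = 0) →
      (∀ e, ∀ u v : G.V, G.ends e = s(u, v) → ωE e ≠ 0 →
        ∑ i, ∑ j, p u i * S i j * p v j = 0) →
      S = 0


open scoped RealInnerProductSpace
open Fin.NatCast

lemma my_arccos_anti {a b : ℝ} (ha : -1 ≤ a) (hb : b ≤ 1) (hab : a ≤ b) :
    Real.arccos b ≤ Real.arccos a := by
  rcases eq_or_lt_of_le hab with rfl | h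
  · exact le_rfl
  · exact le_of_lt (Real.strictAntiOn_arccos ⟨ha, hab.trans hb⟩ ⟨ha.trans hab, hb⟩ h)

lemma my_tri {F : Type*} [NormedAddCommGroup F] [InnerProductSpace ℝ F]
    (x y z : F) (hx : ‖x‖ = 1) (hy : ‖y‖ = 1) (hz : ‖z‖ = 1) :
    Real.arccos ⟪x, z⟫ ≤ Real.arccos ⟪x, y⟫ + Real.arccos ⟪y, z⟫ := by
  set a := ⟪x, y⟫ with ha'
  set b := ⟪y, z⟫ with hb'
  set t := ⟪x, z⟫ with ht'
  have haa : |a| ≤ 1 := by simpa [hx, hy] using abs_real_inner_le_norm x y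
  have hbb : |b| ≤ 1 := by simpa [hy, hz] using abs_real_inner_le_norm y z
  have htt : |t| ≤ 1 := by simpa [hx, hz] using abs_real_inner_le_norm x z
  rw [abs_le] at haa hbb htt
  by_cases hπ : Real.pi ≤ Real.arccos a + Real.arccos b
  · exact le_trans (Real.arccos_le_pi t) hπ
  push_neg at hπ
  have hyy : ⟪y, y⟫ = 1 := by
    rw [real_inner_self_eq_norm_mul_norm, hy]; ring
  set x' := x - a • y with hx'
  set z' := z - b • y with hz'
  have hxz' : ⟪x', z'⟫ = t - a * b := by
    simp only [hx', hz', inner_sub_left, inner_sub_right, real_inner_smul_left,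
      real_inner_smul_right, hyy]
    rw [← ha', ← hb', ← ht']
    ring
  have hxx' : ⟪x', x'⟫ = 1 - a ^ 2 := by
    simp only [hx', inner_sub_left, inner_sub_right, real_inner_smul_left,
      real_inner_smul_right, hyy]
    rw [real_inner_comm x y, ← ha', real_inner_self_eq_norm_mul_norm, hx]
    ring
  have hzz' : ⟪z', z'⟫ = 1 - b ^ 2 := by
    simp only [hz', inner_sub_left, inner_sub_right, real_inner_smul_left,
      real_inner_smul_right, hyy]
    rw [real_inner_comm y z, ← hb', real_inner_self_eq_norm_mul_norm, hz]
    ring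
  have hnx' : ‖x'‖ = Real.sqrt (1 - a ^ 2) := by
    rw [← hxx', real_inner_self_eq_norm_mul_norm, ← sq, Real.sqrt_sq (norm_nonneg _)]
  have hnz' : ‖z'‖ = Real.sqrt (1 - b ^ 2) := by
    rw [← hzz', real_inner_self_eq_norm_mul_norm, ← sq, Real.sqrt_sq (norm_nonneg _)]
  have hcs : -(Real.sqrt (1 - a ^ 2) * Real.sqrt (1 - b ^ 2)) ≤ t - a * b := by
    rw [← hnx', ← hnz', ← hxz']
    exact neg_abs_le _ |>.trans' (by simpa using neg_le_neg (abs_real_inner_le_norm x' z'))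
  have hcos : Real.cos (Real.arccos a + Real.arccos b) ≤ t := by
    rw [Real.cos_add, Real.cos_arccos haa.1 haa.2, Real.cos_arccos hbb.1 hbb.2,
      Real.sin_arccos, Real.sin_arccos]
    linarith
  calc Real.arccos t ≤ Real.arccos (Real.cos (Real.arccos a + Real.arccos b)) :=
        my_arccos_anti (Real.neg_one_le_cos _) htt.2 hcos
    _ = Real.arccos a + Real.arccos b := Real.arccos_cos
        (add_nonneg (Real.arccos_nonneg _) (Real.arccos_nonneg _)) hπ.le

/-- Lemma 2.4. For every signed graph `(G,Σ)` and `c ∈ [-1,1]^E`,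
if `P(G,Σ,c)` is feasible then `arccos(c)/π ∈ MET(G,Σ)`. -/
theorem stmt2_feasible_subset_met (G : SignedGraph) (c : G.E → ℝ)
    (hc : ∀ e, c e ∈ Set.Icc (-1 : ℝ) 1) (hfeas : ∃ X, IsFeasible G c X) :
    InMET G (G.metric c) := by
  classical
  obtain ⟨X, hpsd, hdiag, hcons⟩ := hfeas
  obtain ⟨B, hB⟩ : ∃ B : Matrix G.V G.V ℝ, X = Matrix.conjTranspose B * B := by
    open scoped MatrixOrder Matrix.Norms.L2Operator in
    exact CStarAlgebra.nonneg_iff_eq_star_mul_self.mp hpsd.nonneg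
  set p : G.V → EuclideanSpace ℝ G.V := fun i => WithLp.toLp 2 (fun j => B j i) with hp
  have hinner : ∀ a b, ⟪p a, p b⟫ = X a b := by
    intro a b
    rw [hB]
    simp [hp, PiLp.inner_apply, Matrix.mul_apply, Matrix.conjTranspose_apply,
      RCLike.inner_apply, mul_comm]
  have hnorm : ∀ a, ‖p a‖ = 1 := by
    intro a
    have h1 : ⟪p a, p a⟫ = 1 := by rw [hinner]; exact hdiag a
    rw [real_inner_self_eq_norm_mul_norm] at h1
    nlinarith [norm_nonneg (p a)]
  constructor
  · intro e
    exact ⟨div_nonneg (Real.arccos_nonneg _) Real.pi_pos.le,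
      (div_le_one Real.pi_pos).mpr (Real.arccos_le_pi _)⟩
  intro C hCodd
  set k := C.k with hk
  -- the sign accumulated along the cycle
  set s : ℕ → ℝ := fun n => ∏ j ∈ Finset.range n, G.sgn (C.edge (j : Fin (k + 1))) with hs
  have hsgn_sq : ∀ e, G.sgn e * G.sgn e = 1 := by
    intro e; unfold SignedGraph.sgn; split <;> norm_num
  have hssq : ∀ n, s n * s n = 1 := by
    intro n
    induction n with
    | zero => simp [hs]
    | succ n ih =>
        simp only [hs] at ih ⊢
        rw [Finset.prod_range_succ]
        calc _ = (∏ j ∈ Finset.range n, G.sgn (C.edge (j : Fin (k + 1)))) *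
              (∏ j ∈ Finset.range n, G.sgn (C.edge (j : Fin (k + 1)))) *
              (G.sgn (C.edge (n : Fin (k + 1))) * G.sgn (C.edge (n : Fin (k + 1)))) := by ring
          _ = 1 := by rw [ih, hsgn_sq]; ring
  have hsabs : ∀ n, |s n| = 1 := by
    intro n
    rcases mul_self_eq_one_iff.mp (hssq n) with h | h <;> rw [h] <;> norm_num
  set q : ℕ → EuclideanSpace ℝ G.V := fun n => s n • p (C.vtx (n : Fin (k + 1))) with hq
  have hqnorm : ∀ n, ‖q n‖ = 1 := by
    intro n
    rw [hq]
    simp only [norm_smul, Real.norm_eq_abs, hsabs, hnorm, one_mul]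
  -- the chained triangle inequality
  have chain : ∀ n, Real.arccos ⟪q 0, q n⟫ ≤
      ∑ j ∈ Finset.range n, Real.arccos ⟪q j, q (j + 1)⟫ := by
    intro n
    induction n with
    | zero =>
        have : ⟪q 0, q 0⟫ = 1 := by
          rw [real_inner_self_eq_norm_mul_norm, hqnorm]; ring
        simp [this, hqnorm, Real.arccos_one]
    | succ n ih =>
        rw [Finset.sum_range_succ]
        have := my_tri (q 0) (q n) (q (n + 1)) (hqnorm 0) (hqnorm n) (hqnorm (n + 1))
        linarith
  -- total sign is -1 since the cycle is odd
  have hN : C.oddCount = (Finset.univ.filter (fun i : Fin (k + 1) =>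
      G.odd (C.edge i))).card := by
    rw [GCycle.oddCount, Nat.card_eq_fintype_card, Fintype.card_subtype]
  have hslast : s (k + 1) = -1 := by
    simp only [hs]
    have h1 : (∏ j ∈ Finset.range (k + 1), G.sgn (C.edge (j : Fin (k + 1)))) =
        ∏ i : Fin (k + 1), G.sgn (C.edge i) := by
      rw [← Fin.prod_univ_eq_prod_range (fun j => G.sgn (C.edge (j : Fin (k + 1)))) (k + 1)]
      apply Finset.prod_congr rfl
      intro i _
      rw [Fin.cast_val_eq_self]
    rw [h1]
    have h2 : (∏ i : Fin (k + 1), G.sgn (C.edge i)) =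
        (-1 : ℝ) ^ (Finset.univ.filter (fun i : Fin (k + 1) => G.odd (C.edge i))).card := by
      unfold SignedGraph.sgn
      rw [Finset.prod_ite, Finset.prod_const, Finset.prod_const]
      simp
    rw [h2, ← hN]
    exact (hCodd).neg_one_pow
  have hq0 : ⟪q 0, q (k + 1)⟫ = -1 := by
    have hv : ((k + 1 : ℕ) : Fin (k + 1)) = ((0 : ℕ) : Fin (k + 1)) := by
      simp
    rw [hq]
    simp only [hv, hslast]
    have hs0 : s 0 = 1 := by simp [hs]
    rw [hs0, one_smul, real_inner_smul_right, real_inner_self_eq_norm_mul_norm, hnorm]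
    ring
  have hmain : Real.pi ≤ ∑ j ∈ Finset.range (k + 1), Real.arccos ⟪q j, q (j + 1)⟫ := by
    have := chain (k + 1)
    rwa [hq0, Real.arccos_neg_one] at this
  -- bound each term
  have hterm : ∀ j ∈ Finset.range (k + 1),
      Real.arccos ⟪q j, q (j + 1)⟫ ≤
        (if G.odd (C.edge (j : Fin (k + 1))) then
          Real.pi - Real.arccos (c (C.edge (j : Fin (k + 1))))
        else Real.arccos (c (C.edge (j : Fin (k + 1))))) := by
    intro j _
    set i : Fin (k + 1) := (j : Fin (k + 1)) with hi
    have hcast : ((j + 1 : ℕ) : Fin (k + 1)) = i + 1 := by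
      rw [hi]; push_cast; ring
    have hinn : ⟪q j, q (j + 1)⟫ = G.sgn (C.edge i) * X (C.vtx i) (C.vtx (i + 1)) := by
      rw [hq]
      simp only [hcast, ← hi]
      rw [real_inner_smul_left, real_inner_smul_right, hinner]
      have hsucc : s (j + 1) = s j * G.sgn (C.edge i) := by
        simp only [hs]
        rw [Finset.prod_range_succ, hi]
      rw [hsucc]
      calc s j * (s j * G.sgn (C.edge i) * X (C.vtx i) (C.vtx (i + 1)))
          = (s j * s j) * (G.sgn (C.edge i) * X (C.vtx i) (C.vtx (i + 1))) := by ring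
        _ = G.sgn (C.edge i) * X (C.vtx i) (C.vtx (i + 1)) := by rw [hssq]; ring
    set t := X (C.vtx i) (C.vtx (i + 1)) with ht
    have htb : |t| ≤ 1 := by
      rw [ht, ← hinner]
      simpa [hnorm] using abs_real_inner_le_norm (p (C.vtx i)) (p (C.vtx (i + 1)))
    rw [abs_le] at htb
    have hcon := hcons (C.edge i) (Set.mem_univ _) (C.vtx i) (C.vtx (i + 1)) (C.incid i)
    have hce := hc (C.edge i)
    by_cases hodd : G.odd (C.edge i)
    · have h1 : t ≤ c (C.edge i) := hcon.1 hodd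
      have h2 : ⟪q j, q (j + 1)⟫ = -t := by
        rw [hinn]
        unfold SignedGraph.sgn
        rw [if_pos hodd]; ring
      rw [h2, Real.arccos_neg, if_pos hodd]
      have := my_arccos_anti htb.1 hce.2 h1
      linarith
    · have h1 : c (C.edge i) ≤ t := hcon.2 hodd
      have h2 : ⟪q j, q (j + 1)⟫ = t := by
        rw [hinn]
        unfold SignedGraph.sgn
        rw [if_neg hodd]; ring
      rw [h2, if_neg hodd]
      exact my_arccos_anti hce.1 htb.2 h1
  have hsum : Real.pi ≤ ∑ j ∈ Finset.range (k + 1),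
      (if G.odd (C.edge (j : Fin (k + 1))) then
        Real.pi - Real.arccos (c (C.edge (j : Fin (k + 1))))
      else Real.arccos (c (C.edge (j : Fin (k + 1))))) :=
    le_trans hmain (Finset.sum_le_sum hterm)
  have hfin : (∑ j ∈ Finset.range (k + 1),
      (if G.odd (C.edge (j : Fin (k + 1))) then
        Real.pi - Real.arccos (c (C.edge (j : Fin (k + 1))))
      else Real.arccos (c (C.edge (j : Fin (k + 1)))))) =
      ∑ i : Fin (k + 1), (if G.odd (C.edge i) then
        Real.pi - Real.arccos (c (C.edge i)) else Real.arccos (c (C.edge i))) := by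
    rw [← Fin.sum_univ_eq_sum_range (fun j => if G.odd (C.edge (j : Fin (k + 1))) then
        Real.pi - Real.arccos (c (C.edge (j : Fin (k + 1))))
      else Real.arccos (c (C.edge (j : Fin (k + 1))))) (k + 1)]
    apply Finset.sum_congr rfl
    intro i _
    rw [Fin.cast_val_eq_self]
  rw [hfin] at hsum
  -- split the sum
  have hsplit : (∑ i : Fin (k + 1), (if G.odd (C.edge i) then
      Real.pi - Real.arccos (c (C.edge i)) else Real.arccos (c (C.edge i)))) =
      (C.oddCount : ℝ) * Real.pi +
        ∑ i : Fin (k + 1), G.sgn (C.edge i) * Real.arccos (c (C.edge i)) := by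
    have h1 : ∀ i : Fin (k + 1), (if G.odd (C.edge i) then
        Real.pi - Real.arccos (c (C.edge i)) else Real.arccos (c (C.edge i))) =
        (if G.odd (C.edge i) then Real.pi else 0) +
          G.sgn (C.edge i) * Real.arccos (c (C.edge i)) := by
      intro i
      unfold SignedGraph.sgn
      split <;> ring
    rw [Finset.sum_congr rfl (fun i _ => h1 i), Finset.sum_add_distrib]
    congr 1
    rw [Finset.sum_ite, Finset.sum_const, Finset.sum_const_zero, hN]
    simp [mul_comm]
  rw [hsplit] at hsum
  -- conclude
  have hgoal : ∑ i : Fin (k + 1), G.sgn (C.edge i) * G.metric c (C.edge i) =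
      (∑ i : Fin (k + 1), G.sgn (C.edge i) * Real.arccos (c (C.edge i))) / Real.pi := by
    rw [Finset.sum_div]
    apply Finset.sum_congr rfl
    intro i _
    rw [SignedGraph.metric, mul_div_assoc]
  show (1 : ℝ) - (C.oddCount : ℝ) ≤ ∑ i : Fin (k + 1), G.sgn (C.edge i) * G.metric c (C.edge i)
  rw [hgoal, le_div_iff₀ Real.pi_pos]
  nlinarith [Real.pi_pos]
end

section
/- Let (G,Σ) be a signed graph with G isomorphic to K₃ (a triangle on three vertices) and c ∈ [−1,1]^E nondegenerate. Suppose the triangle is an odd cycle and is tight with respect to c. Then P(G,Σ,c) has a unique feasible solution, this solution has rank exactly two, and there exists a nice dual solution ω supported on strictly tight edges (in fact with ω(e) ≠ 0 for every edge e). -/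
open Real in
private lemma key_arccos (s0 s1 s2 : ℝ) (h0 : s0 ∈ Set.Icc (-1:ℝ) 1) (h1 : s1 ∈ Set.Icc (-1:ℝ) 1)
    (h2 : s2 ∈ Set.Icc (-1:ℝ) 1)
    (hdet : 0 ≤ 1 - 2*(s0*s1*s2) - s0^2 - s1^2 - s2^2) :
    π ≤ arccos s0 + arccos s1 + arccos s2 := by
  by_contra hcon
  push_neg at hcon
  have hA0 : arccos s0 < π - (arccos s1 + arccos s2) := by linarith
  have hle : π - (arccos s1 + arccos s2) ≤ π := by
    have := arccos_nonneg s1; have := arccos_nonneg s2; linarith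
  have hcc : cos (π - (arccos s1 + arccos s2)) < cos (arccos s0) :=
    cos_lt_cos_of_nonneg_of_le_pi (arccos_nonneg s0) hle hA0
  rw [cos_pi_sub, cos_arccos h0.1 h0.2, cos_add, cos_arccos h1.1 h1.2, cos_arccos h2.1 h2.2,
    sin_arccos, sin_arccos] at hcc
  have e1 : (0:ℝ) ≤ 1 - s1^2 := by nlinarith [h1.1, h1.2]
  have e2 : (0:ℝ) ≤ 1 - s2^2 := by nlinarith [h2.1, h2.2]
  have hprod : √(1 - s1^2) * √(1 - s2^2) = √((1 - s1^2) * (1 - s2^2)) := by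
    rw [← Real.sqrt_mul e1]
  have hnn : (0:ℝ) ≤ (1 - s1^2) * (1 - s2^2) := mul_nonneg e1 e2
  have hsq := Real.sq_sqrt hnn
  have hpos := Real.sqrt_nonneg ((1 - s1^2) * (1 - s2^2))
  rw [hprod] at hcc
  nlinarith [hcc, hsq, hpos, hdet]

private lemma psd_entry_bound {V : Type} [Fintype V] [DecidableEq V] {X : Matrix V V ℝ}
    (hX : X.PosSemidef) {u v : V} (huv : u ≠ v) (hu : X u u = 1) (hv : X v v = 1)
    (hsym : X v u = X u v) : X u v ∈ Set.Icc (-1:ℝ) 1 := by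
  have key : ∀ a b : ℝ, 0 ≤ a * (X u u * a) + b * (X v u * a) + (a * (X u v * b) + b * (X v v * b)) := by
    intro a b
    have h := hX.dotProduct_mulVec_nonneg ((Pi.single u a : V → ℝ) + (Pi.single v b : V → ℝ))
    have hstar : star ((Pi.single u a : V → ℝ) + (Pi.single v b : V → ℝ))
        = (Pi.single u a : V → ℝ) + (Pi.single v b : V → ℝ) := by
      ext w; simp
    rw [hstar, Matrix.mulVec_add, Matrix.mulVec_single, Matrix.mulVec_single,
      dotProduct_add, add_dotProduct, add_dotProduct,
      single_dotProduct, single_dotProduct, single_dotProduct,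
      single_dotProduct] at h
    simpa using h
  have k1 := key 1 1
  have k2 := key 1 (-1)
  rw [hu, hv, hsym] at k1 k2
  constructor <;> nlinarith [k1, k2]

private lemma rank_ge_of_li {m : Type} [Fintype m] [DecidableEq m] (A : Matrix m m ℝ) {k : ℕ}
    (w : Fin k → (m → ℝ)) (hmem : ∀ i, w i ∈ LinearMap.range A.mulVecLin)
    (hli : LinearIndependent ℝ w) : k ≤ A.rank := by
  have hspan : Submodule.span ℝ (Set.range w) ≤ LinearMap.range A.mulVecLin :=
    Submodule.span_le.2 (Set.range_subset_iff.2 hmem)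
  have hmono := Submodule.finrank_mono hspan
  rw [finrank_span_eq_card hli, Fintype.card_fin] at hmono
  simpa [Matrix.rank] using hmono

private lemma psd_det_nonneg {n : Type} [Fintype n] [DecidableEq n] {A : Matrix n n ℝ}
    (h : A.PosSemidef) : 0 ≤ A.det := by
  rw [h.1.det_eq_prod_eigenvalues]
  exact Finset.prod_nonneg fun i _ => h.eigenvalues_nonneg i

private lemma arccos_anti {x y : ℝ} (hx : -1 ≤ x) (hxy : x ≤ y) (hy : y ≤ 1) :
    Real.arccos y ≤ Real.arccos x := by
  rcases eq_or_lt_of_le hxy with rfl | h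
  · exact le_refl _
  · exact le_of_lt (Real.strictAntiOn_arccos ⟨hx, le_trans hxy hy⟩ ⟨le_trans hx hxy, hy⟩ h)

set_option maxHeartbeats 1000000 in
open Classical in
private lemma main_aux (G : SignedGraph) (c : G.E → ℝ)
    (hc : ∀ e, c e ∈ Set.Icc (-1 : ℝ) 1) (hnd : G.NondegWeights c)
    (hV : Fintype.card G.V = 3)
    (vtx : Fin 3 → G.V) (edge : Fin 3 → G.E)
    (vbij : Function.Bijective vtx) (ebij : Function.Bijective edge)
    (incid : ∀ i : Fin 3, G.ends (edge i) = s(vtx i, vtx (i + 1)))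
    (hodd : (if G.odd (edge 0) then (-1:ℝ) else 1) * (if G.odd (edge 1) then (-1:ℝ) else 1)
        * (if G.odd (edge 2) then (-1:ℝ) else 1) = -1)
    (htight : Real.arccos ((if G.odd (edge 0) then (-1:ℝ) else 1) * c (edge 0))
        + Real.arccos ((if G.odd (edge 1) then (-1:ℝ) else 1) * c (edge 1))
        + Real.arccos ((if G.odd (edge 2) then (-1:ℝ) else 1) * c (edge 2)) = Real.pi) :
    (∃! X, IsFeasible G c X) ∧ (∀ X, IsFeasible G c X → X.rank = 2) ∧
    ∃ (ωV : G.V → ℝ) (ωE : G.E → ℝ), IsNiceDual G c ωV ωE ∧ ∀ e, ωE e ≠ 0 := by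
  classical
  have vinj := vbij.injective
  have einj := ebij.injective
  have pi_pos := Real.pi_pos
  set τ : Fin 3 → ℝ := fun i => if G.odd (edge i) then (-1:ℝ) else 1 with hτ
  set r : Fin 3 → ℝ := fun i => τ i * c (edge i) with hrdef
  set A : Fin 3 → ℝ := fun i => Real.arccos (r i) with hAdef
  have hodd' : τ 0 * τ 1 * τ 2 = -1 := hodd
  have hA3 : A 0 + A 1 + A 2 = Real.pi := htight
  have hτval : ∀ i, (G.odd (edge i) → τ i = -1) ∧ (¬ G.odd (edge i) → τ i = 1) := by
    intro i; constructor <;> intro h <;> simp [hτ, h]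
  have hτsq : ∀ i, τ i * τ i = 1 := by
    intro i; by_cases h : G.odd (edge i)
    · rw [(hτval i).1 h]; norm_num
    · rw [(hτval i).2 h]; norm_num
  have hr_mem : ∀ i, r i ∈ Set.Icc (-1:ℝ) 1 := by
    intro i
    have h1 := (hc (edge i)).1; have h2 := (hc (edge i)).2
    rw [Set.mem_Icc]
    by_cases h : G.odd (edge i)
    · rw [hrdef]; simp only; rw [(hτval i).1 h]; constructor <;> linarith
    · rw [hrdef]; simp only; rw [(hτval i).2 h]; constructor <;> linarith
  have hrne1 : ∀ i, r i ≠ 1 := by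
    intro i
    by_cases h : G.odd (edge i)
    · rw [hrdef]; simp only; rw [(hτval i).1 h]
      intro hcon
      exact (hnd (edge i)).1 h (by linarith)
    · rw [hrdef]; simp only; rw [(hτval i).2 h]
      intro hcon
      exact (hnd (edge i)).2 h (by linarith)
  have hApos : ∀ i, 0 < A i := fun i =>
    Real.arccos_pos.2 (lt_of_le_of_ne (hr_mem i).2 (hrne1 i))
  have hAle : ∀ i, A i ≤ Real.pi := fun i => Real.arccos_le_pi (r i)
  have hAltpi : ∀ i, A i < Real.pi := by
    have h0 := hApos 0; have h1 := hApos 1; have h2 := hApos 2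
    intro i
    have hi : A i = A 0 ∨ A i = A 1 ∨ A i = A 2 := by
      fin_cases i
      · exact Or.inl rfl
      · exact Or.inr (Or.inl rfl)
      · exact Or.inr (Or.inr rfl)
    rcases hi with h|h|h <;> rw [h] <;> linarith
  have hAcos : ∀ i, Real.cos (A i) = r i := fun i =>
    Real.cos_arccos (hr_mem i).1 (hr_mem i).2
  have hsinA : ∀ i, 0 < Real.sin (A i) := fun i =>
    Real.sin_pos_of_pos_of_lt_pi (hApos i) (hAltpi i)
  have hr_open : ∀ i, -1 < r i ∧ r i < 1 := by
    intro i
    constructor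
    · have h := Real.cos_lt_cos_of_nonneg_of_le_pi (le_of_lt (hApos i)) (le_refl Real.pi) (hAltpi i)
      rw [Real.cos_pi, hAcos i] at h; exact h
    · have h := Real.cos_lt_cos_of_nonneg_of_le_pi (le_refl 0) (hAle i) (hApos i)
      rw [Real.cos_zero, hAcos i] at h; exact h
  have hγsq : ∀ i, (c (edge i))^2 < 1 := by
    intro i
    have h1 := (hr_open i).1; have h2 := (hr_open i).2
    have hsq : (r i)^2 < 1 := by nlinarith
    have hτ2 := hτsq i
    rw [hrdef] at hsq; simp only at hsq
    nlinarith [hsq]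
  set d : Fin 3 → ℝ := fun i => if G.odd (edge i) then A i - Real.pi else A i with hddef
  have hdval : ∀ i, (G.odd (edge i) → d i = A i - Real.pi) ∧ (¬ G.odd (edge i) → d i = A i) := by
    intro i; constructor <;> intro h <;> simp [hddef, h]
  have hcosd : ∀ i, Real.cos (d i) = c (edge i) := by
    intro i
    by_cases h : G.odd (edge i)
    · have hco := hAcos i
      rw [hrdef] at hco; simp only at hco; rw [(hτval i).1 h] at hco
      rw [(hdval i).1 h, Real.cos_sub_pi, hco]; ring
    · have hco := hAcos i
      rw [hrdef] at hco; simp only at hco; rw [(hτval i).2 h] at hco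
      rw [(hdval i).2 h, hco]; ring
  have hsind : ∀ i, Real.sin (d i) = τ i * Real.sin (A i) := by
    intro i
    by_cases h : G.odd (edge i)
    · rw [(hdval i).1 h, (hτval i).1 h, Real.sin_sub_pi]; ring
    · rw [(hdval i).2 h, (hτval i).2 h]; ring
  have hd01 : d 0 + d 1 = -d 2 ∨ d 0 + d 1 = -d 2 - 2*Real.pi := by
    by_cases h0 : G.odd (edge 0) <;> by_cases h1 : G.odd (edge 1) <;>
      by_cases h2 : G.odd (edge 2)
    · rw [(hdval 0).1 h0, (hdval 1).1 h1, (hdval 2).1 h2]; right; linarith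
    · exfalso; rw [(hτval 0).1 h0, (hτval 1).1 h1, (hτval 2).2 h2] at hodd'; norm_num at hodd'
    · exfalso; rw [(hτval 0).1 h0, (hτval 1).2 h1, (hτval 2).1 h2] at hodd'; norm_num at hodd'
    · rw [(hdval 0).1 h0, (hdval 1).2 h1, (hdval 2).2 h2]; left; linarith
    · exfalso; rw [(hτval 0).2 h0, (hτval 1).1 h1, (hτval 2).1 h2] at hodd'; norm_num at hodd'
    · rw [(hdval 0).2 h0, (hdval 1).1 h1, (hdval 2).2 h2]; left; linarith
    · rw [(hdval 0).2 h0, (hdval 1).2 h1, (hdval 2).1 h2]; left; linarith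
    · exfalso; rw [(hτval 0).2 h0, (hτval 1).2 h1, (hτval 2).2 h2] at hodd'; norm_num at hodd'
  have hcos12 : Real.cos (d 0 + d 1) = Real.cos (d 2) := by
    rcases hd01 with h | h
    · rw [h, Real.cos_neg]
    · rw [h, show -d 2 - 2*Real.pi = -d 2 - 2*Real.pi from rfl]
      rw [show -d 2 - 2*Real.pi = (-d 2) - 2*Real.pi by ring, Real.cos_sub_two_pi, Real.cos_neg]
  have hsin12 : Real.sin (d 0 + d 1) = -Real.sin (d 2) := by
    rcases hd01 with h | h
    · rw [h, Real.sin_neg]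
    · rw [h, show -d 2 - 2*Real.pi = (-d 2) - 2*Real.pi by ring, Real.sin_sub_two_pi, Real.sin_neg]
  -- the configuration on the circle
  set vE : Fin 3 ≃ G.V := Equiv.ofBijective vtx vbij with hvE
  set eE : Fin 3 ≃ G.E := Equiv.ofBijective edge ebij with heE
  have hvEapp : ∀ i, vE i = vtx i := fun i => rfl
  have hvEsymm : ∀ i, vE.symm (vtx i) = i := fun i => vE.symm_apply_apply i
  have heEsymm : ∀ i, eE.symm (edge i) = i := fun i => eE.symm_apply_apply i
  set ψ : Fin 3 → ℝ := ![0, d 0, d 0 + d 1] with hψ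
  have hψ0 : ψ 0 = 0 := rfl
  have hψ1 : ψ 1 = d 0 := rfl
  have hψ2 : ψ 2 = d 0 + d 1 := rfl
  set φ : G.V → ℝ := fun u => ψ (vE.symm u) with hφ
  have hφv : ∀ i, φ (vtx i) = ψ i := by
    intro i; rw [hφ]; simp only; rw [hvEsymm]
  set P : Matrix G.V (Fin 2) ℝ :=
    Matrix.of (fun u j => ![Real.cos (φ u), Real.sin (φ u)] j) with hP
  set X₀ : Matrix G.V G.V ℝ := P * P.transpose with hX₀
  have hX₀app : ∀ u v, X₀ u v = Real.cos (φ u - φ v) := by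
    intro u v
    rw [hX₀, Matrix.mul_apply, Fin.sum_univ_two]
    show Real.cos (φ u) * Real.cos (φ v) + Real.sin (φ u) * Real.sin (φ v)
        = Real.cos (φ u - φ v)
    rw [Real.cos_sub]
  have hX₀sym : ∀ u v, X₀ u v = X₀ v u := by
    intro u v; rw [hX₀app, hX₀app, ← Real.cos_neg]; ring_nf
  have hX₀diag : ∀ u, X₀ u u = 1 := by
    intro u; rw [hX₀app]; simp
  have hfin3 : ∀ i : Fin 3, i = 0 ∨ i = 1 ∨ i = 2 := by decide
  have h01 : (0:Fin 3) + 1 = 1 := rfl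
  have h11 : (1:Fin 3) + 1 = 2 := rfl
  have h21 : (2:Fin 3) + 1 = 0 := rfl
  have hX₀edge : ∀ i, X₀ (vtx i) (vtx (i + 1)) = c (edge i) := by
    intro i
    rcases hfin3 i with rfl | rfl | rfl
    · rw [h01, hX₀app, hφv, hφv, hψ0, hψ1, show (0:ℝ) - d 0 = -(d 0) by ring,
        Real.cos_neg, hcosd]
    · rw [h11, hX₀app, hφv, hφv, hψ1, hψ2, show d 0 - (d 0 + d 1) = -(d 1) by ring,
        Real.cos_neg, hcosd]
    · rw [h21, hX₀app, hφv, hφv, hψ2, hψ0, show d 0 + d 1 - 0 = d 0 + d 1 by ring,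
        hcos12, hcosd]
  have hPSD₀ : X₀.PosSemidef := by
    have h := Matrix.posSemidef_self_mul_conjTranspose P
    have hPH : P.conjTranspose = P.transpose := by
      ext u j; simp [Matrix.conjTranspose_apply]
    rwa [hPH] at h
  have hval₀ : ∀ e (u v : G.V), G.ends e = s(u, v) → X₀ u v = c e := by
    intro e u v hends
    obtain ⟨i, rfl⟩ := ebij.2 e
    rw [incid i] at hends
    rw [Sym2.eq_iff] at hends
    rcases hends with ⟨h1, h2⟩ | ⟨h1, h2⟩
    · rw [← h1, ← h2, hX₀edge]
    · rw [← h1, ← h2, hX₀sym, hX₀edge]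
  have hfeas₀ : IsFeasible G c X₀ := by
    refine ⟨hPSD₀, hX₀diag, fun e _ u v hends => ?_⟩
    have := hval₀ e u v hends
    exact ⟨fun _ => le_of_eq this, fun _ => le_of_eq this.symm⟩
  -- uniqueness
  have hne1 : ∀ i : Fin 3, i ≠ i + 1 := by decide
  have huniq : ∀ X, IsFeasible G c X → X = X₀ := by
    intro X hX
    obtain ⟨hpsd, hdiag, hcons⟩ := hX
    have hXsym : ∀ u v : G.V, X v u = X u v := by
      intro u v
      have h := congrFun (congrFun hpsd.1 u) v
      simpa [Matrix.conjTranspose_apply] using h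
    set t : Fin 3 → ℝ := fun i => X (vtx i) (vtx (i + 1)) with htdef
    have ht_mem : ∀ i, t i ∈ Set.Icc (-1:ℝ) 1 := by
      intro i
      exact psd_entry_bound hpsd (fun h => hne1 i (vinj h)) (hdiag _) (hdiag _)
        (hXsym _ _)
    have hcon : ∀ i, (G.odd (edge i) → t i ≤ c (edge i)) ∧
        (¬ G.odd (edge i) → c (edge i) ≤ t i) :=
      fun i => hcons (edge i) (Set.mem_univ _) (vtx i) (vtx (i + 1)) (incid i)
    set s : Fin 3 → ℝ := fun i => τ i * t i with hsdef
    have hs_ge : ∀ i, r i ≤ s i := by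
      intro i
      by_cases h : G.odd (edge i)
      · rw [hrdef, hsdef]; simp only; rw [(hτval i).1 h]
        have := (hcon i).1 h; linarith
      · rw [hrdef, hsdef]; simp only; rw [(hτval i).2 h]
        have := (hcon i).2 h; linarith
    have hs_mem : ∀ i, s i ∈ Set.Icc (-1:ℝ) 1 := by
      intro i
      have h1 := (ht_mem i).1; have h2 := (ht_mem i).2
      rw [Set.mem_Icc]
      by_cases h : G.odd (edge i)
      · rw [hsdef]; simp only; rw [(hτval i).1 h]; constructor <;> linarith
      · rw [hsdef]; simp only; rw [(hτval i).2 h]; constructor <;> linarith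
    have hdet0 : 0 ≤ X.det := psd_det_nonneg hpsd
    have hdet : X.det = 1 + 2*(t 0 * t 1 * t 2) - t 0^2 - t 1^2 - t 2^2 := by
      rw [← Matrix.det_submatrix_equiv_self vE X, Matrix.det_fin_three]
      simp only [Matrix.submatrix_apply]
      have hv : ∀ i : Fin 3, vE i = vtx i := fun i => rfl
      rw [hv, hv, hv]
      have e00 : X (vtx 0) (vtx 0) = 1 := hdiag _
      have e11 : X (vtx 1) (vtx 1) = 1 := hdiag _
      have e22 : X (vtx 2) (vtx 2) = 1 := hdiag _
      have e01 : X (vtx 0) (vtx 1) = t 0 := rfl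
      have e10 : X (vtx 1) (vtx 0) = t 0 := hXsym _ _
      have e12 : X (vtx 1) (vtx 2) = t 1 := rfl
      have e21 : X (vtx 2) (vtx 1) = t 1 := hXsym _ _
      have e20 : X (vtx 2) (vtx 0) = t 2 := rfl
      have e02 : X (vtx 0) (vtx 2) = t 2 := hXsym _ _
      rw [e00, e11, e22, e01, e10, e12, e21, e20, e02]
      ring
    have hsdet : 0 ≤ 1 - 2*(s 0 * s 1 * s 2) - s 0^2 - s 1^2 - s 2^2 := by
      have hs012 : s 0 * s 1 * s 2 = -(t 0 * t 1 * t 2) := by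
        rw [hsdef]; simp only
        linear_combination (t 0 * t 1 * t 2) * hodd'
      have hssq : ∀ i, s i^2 = t i^2 := by
        intro i; rw [hsdef]; simp only
        linear_combination (t i^2) * (hτsq i)
      rw [hs012, hssq 0, hssq 1, hssq 2]
      rw [hdet] at hdet0; linarith
    have hkey := key_arccos (s 0) (s 1) (s 2) (hs_mem 0) (hs_mem 1) (hs_mem 2) hsdet
    have harc_le : ∀ i, Real.arccos (s i) ≤ Real.arccos (r i) :=
      fun i => arccos_anti (hr_mem i).1 (hs_ge i) (hs_mem i).2
    have heq : ∀ i, s i = r i := by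
      have l0 := harc_le 0; have l1 := harc_le 1; have l2 := harc_le 2
      have heq' : ∀ i, Real.arccos (s i) = Real.arccos (r i) := by
        intro i
        rcases hfin3 i with rfl | rfl | rfl <;>
          [linarith [hA3, hkey]; linarith [hA3, hkey]; linarith [hA3, hkey]]
      intro i
      have h1 := Real.cos_arccos (hs_mem i).1 (hs_mem i).2
      have h2 := Real.cos_arccos (hr_mem i).1 (hr_mem i).2
      rw [← h1, ← h2, heq' i]
    have ht : ∀ i, t i = c (edge i) := by
      intro i
      have h := heq i
      rw [hsdef, hrdef] at h; simp only at h
      linear_combination (τ i) * h - (t i - c (edge i)) * (hτsq i)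
    have hXval : ∀ e (u v : G.V), G.ends e = s(u, v) → X u v = c e := by
      intro e u v hends
      obtain ⟨i, rfl⟩ := ebij.2 e
      rw [incid i] at hends
      rw [Sym2.eq_iff] at hends
      rcases hends with ⟨hh1, hh2⟩ | ⟨hh1, hh2⟩
      · rw [← hh1, ← hh2]; exact ht i
      · rw [← hh1, ← hh2, hXsym]; exact ht i
    ext u v
    obtain ⟨a, rfl⟩ := vbij.2 u
    obtain ⟨b, rfl⟩ := vbij.2 v
    rcases hfin3 a with rfl | rfl | rfl <;> rcases hfin3 b with rfl | rfl | rfl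
    · rw [hdiag, hX₀diag]
    · rw [show X (vtx 0) (vtx 1) = t 0 from rfl, ht 0, ← h01, hX₀edge]
    · rw [hXsym, show X (vtx 2) (vtx 0) = t 2 from rfl, ht 2, hX₀sym, ← h21, hX₀edge]
    · rw [hXsym, show X (vtx 0) (vtx 1) = t 0 from rfl, ht 0, hX₀sym, ← h01, hX₀edge]
    · rw [hdiag, hX₀diag]
    · rw [show X (vtx 1) (vtx 2) = t 1 from rfl, ht 1, ← h11, hX₀edge]
    · rw [show X (vtx 2) (vtx 0) = t 2 from rfl, ht 2, ← h21, hX₀edge]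
    · rw [hXsym, show X (vtx 1) (vtx 2) = t 1 from rfl, ht 1, hX₀sym, ← h11, hX₀edge]
    · rw [hdiag, hX₀diag]
  -- rank of X₀
  have hrank₀ : X₀.rank = 2 := by
    have hle : X₀.rank ≤ 2 := by
      have h1 : X₀.rank ≤ P.rank := by rw [hX₀]; exact Matrix.rank_mul_le_left P P.transpose
      have h2 : P.rank ≤ Fintype.card (Fin 2) := Matrix.rank_le_card_width P
      simpa using le_trans h1 h2
    have hge : 2 ≤ X₀.rank := by
      have hγ0 : (c (edge 0))^2 < 1 := hγsq 0
      set w : Fin 2 → (G.V → ℝ) :=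
        ![X₀.mulVec (Pi.single (vtx 0) 1), X₀.mulVec (Pi.single (vtx 1) 1)] with hw
      have hmem : ∀ i, w i ∈ LinearMap.range X₀.mulVecLin := by
        intro i
        fin_cases i
        · exact ⟨Pi.single (vtx 0) 1, rfl⟩
        · exact ⟨Pi.single (vtx 1) 1, rfl⟩
      have hli : LinearIndependent ℝ w := by
        rw [hw, LinearIndependent.pair_iff]
        intro a b hab
        have h0 := congrFun hab (vtx 0)
        have h1 := congrFun hab (vtx 1)
        simp only [Pi.add_apply, Pi.smul_apply, Matrix.mulVec_single_one, Matrix.col_apply, smul_eq_mul,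
          Pi.zero_apply, mul_one] at h0 h1
        rw [hX₀diag] at h0
        rw [hX₀diag] at h1
        have he01 : X₀ (vtx 0) (vtx 1) = c (edge 0) := by rw [← h01, hX₀edge]
        have he10 : X₀ (vtx 1) (vtx 0) = c (edge 0) := by rw [hX₀sym, ← h01, hX₀edge]
        rw [he01] at h0
        rw [he10] at h1
        have hb : b * (1 - c (edge 0)^2) = 0 := by linear_combination h1 - c (edge 0) * h0
        have hb0 : b = 0 := by
          rcases mul_eq_zero.1 hb with h | h
          · exact h
          · exfalso; nlinarith [hγ0]
        have ha0 : a = 0 := by rw [hb0] at h0; linarith [h0]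
        exact ⟨ha0, hb0⟩
      exact rank_ge_of_li X₀ w hmem hli
    omega
  -- the dual solution
  set Q : Fin 3 → ℝ := fun i => -Real.sin (d (i + 1)) with hQdef
  set qv : G.V → ℝ := fun u => Q (vE.symm u) with hqvdef
  have hqv : ∀ i, qv (vtx i) = Q i := by
    intro i; rw [hqvdef]; simp only; rw [hvEsymm]
  set wE : Fin 3 → ℝ := fun i => 2 * Q i * Q (i + 1) with hwEdef
  have hwEval : ∀ i, wE i = 2 * Q i * Q (i + 1) := fun i => rfl
  set ωE : G.E → ℝ := fun e => wE (eE.symm e) with hωEdef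
  have hωE : ∀ i, ωE (edge i) = wE i := by
    intro i; rw [hωEdef]; simp only; rw [heEsymm]
  set ωV : G.V → ℝ := fun u => qv u * qv u with hωVdef
  have hωV : ∀ i : Fin 3, ωV (vtx i) = Q i * Q i := by
    intro i; rw [hωVdef]; simp only; rw [hqv]
  set QM : Matrix G.V G.V ℝ := Matrix.of (fun u v => qv u * qv v) with hQMdef
  have hQM : ∀ u v, QM u v = qv u * qv v := fun u v => rfl
  have hsine : ∀ j, Real.sin (d j) ≠ 0 := by
    intro j
    rw [hsind j]
    have hτne : τ j ≠ 0 := by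
      intro h; have := hτsq j; rw [h] at this; norm_num at this
    exact mul_ne_zero hτne (ne_of_gt (hsinA j))
  have hQne : ∀ i, Q i ≠ 0 := by
    intro i; rw [hQdef]; simp only
    exact neg_ne_zero.2 (hsine (i + 1))
  -- trig identities for the kernel vector
  have hsd2 : Real.sin (d 2) = -Real.sin (d 0 + d 1) := by linarith [hsin12]
  have hc1 : Q 0 * Real.cos (ψ 0) + Q 1 * Real.cos (ψ 1) + Q 2 * Real.cos (ψ 2) = 0 := by
    rw [hψ0, hψ1, hψ2, hQdef]; simp only
    rw [show (0:Fin 3) + 1 = 1 from rfl, show (1:Fin 3) + 1 = 2 from rfl,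
      show (2:Fin 3) + 1 = 0 from rfl]
    rw [Real.cos_zero, hsd2, Real.sin_add, Real.cos_add]
    linear_combination Real.sin (d 1) * Real.sin_sq_add_cos_sq (d 0)
  have hc2 : Q 0 * Real.sin (ψ 0) + Q 1 * Real.sin (ψ 1) + Q 2 * Real.sin (ψ 2) = 0 := by
    rw [hψ0, hψ1, hψ2, hQdef]; simp only
    rw [show (0:Fin 3) + 1 = 1 from rfl, show (1:Fin 3) + 1 = 2 from rfl,
      show (2:Fin 3) + 1 = 0 from rfl]
    rw [Real.sin_zero, hsd2]; ring
  have hker : ∀ u, (∑ v, X₀ u v * qv v) = 0 := by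
    intro u
    rw [← Equiv.sum_comp vE (fun v => X₀ u v * qv v)]
    have hterm : ∀ b : Fin 3, X₀ u (vE b) * qv (vE b)
        = (Real.cos (φ u) * Real.cos (ψ b) + Real.sin (φ u) * Real.sin (ψ b)) * Q b := by
      intro b
      rw [hvEapp, hX₀app, hφv, hqv, Real.cos_sub]
    rw [Finset.sum_congr rfl (fun b _ => hterm b), Fin.sum_univ_three]
    linear_combination Real.cos (φ u) * hc1 + Real.sin (φ u) * hc2
  -- the dual matrix equals QM
  have hsp : ∀ (x y u' v' : G.V), symPairMat s(x, y) u' v'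
      = (1/2:ℝ) * ((if x = u' ∧ y = v' then (1:ℝ) else 0)
        + (if y = u' ∧ x = v' then 1 else 0)) := by
    intro x y u' v'
    rw [symPairMat, Sym2.lift_mk]
    simp [Matrix.single_apply, Matrix.smul_apply, Matrix.add_apply]
  have hΩapp : ∀ a b : Fin 3, DualMat G ωV ωE (vtx a) (vtx b) = Q a * Q b := by
    intro a b
    simp only [DualMat, Matrix.add_apply, Matrix.diagonal_apply, Matrix.sum_apply,
      Matrix.smul_apply, smul_eq_mul]
    rw [← Equiv.sum_comp eE (fun e => ωE e * symPairMat (G.ends e) (vtx a) (vtx b))]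
    have hsum : ∀ i : Fin 3, ωE (eE i) * symPairMat (G.ends (eE i)) (vtx a) (vtx b)
        = wE i * ((1/2:ℝ) * ((if i = a ∧ i + 1 = b then (1:ℝ) else 0)
          + (if i + 1 = a ∧ i = b then 1 else 0))) := by
      intro i
      have heq : eE i = edge i := rfl
      rw [heq, hωE i, incid i, hsp]
      simp only [vinj.eq_iff]
    rw [Finset.sum_congr rfl (fun i _ => hsum i), Fin.sum_univ_three]
    simp only [vinj.eq_iff]
    rcases hfin3 a with rfl | rfl | rfl <;> rcases hfin3 b with rfl | rfl | rfl <;>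
      simp only [hωV, hwEval, Fin.reduceAdd, Fin.reduceEq, and_true, true_and, and_false,
        false_and, and_self, if_true, if_false, ite_true, ite_false, mul_zero, zero_mul,
        mul_one, one_mul, add_zero, zero_add] <;> ring
  have hΩeq : DualMat G ωV ωE = QM := by
    ext u v
    obtain ⟨a, rfl⟩ := vbij.2 u
    obtain ⟨b, rfl⟩ := vbij.2 v
    rw [hΩapp, hQM, hqv, hqv]
  -- QM is PSD
  have hQMpsd : QM.PosSemidef := by
    rw [Matrix.posSemidef_iff_dotProduct_mulVec]
    constructor
    · ext u v
      rw [Matrix.conjTranspose_apply, hQM, hQM]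
      simp [mul_comm]
    · intro x
      have hx : star x = x := by ext w; simp
      rw [hx]
      have hdp : dotProduct x (QM.mulVec x)
          = (∑ v, qv v * x v) * (∑ v, qv v * x v) := by
        rw [Finset.sum_mul_sum]
        simp only [dotProduct, Matrix.mulVec, hQM]
        rw [Finset.sum_congr rfl (fun u _ => rfl)]
        apply Finset.sum_congr rfl
        intro u _
        rw [Finset.mul_sum]
        apply Finset.sum_congr rfl
        intro v _
        ring
      rw [hdp]
      exact mul_self_nonneg _
  -- trace condition
  have htr : (X₀ * QM).trace = 0 := by
    have hdiag0 : ∀ u, (X₀ * QM) u u = 0 := by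
      intro u
      rw [Matrix.mul_apply]
      have hterm : ∀ v, X₀ u v * QM v u = (X₀ u v * qv v) * qv u := by
        intro v; rw [hQM]; ring
      rw [Finset.sum_congr rfl (fun v _ => hterm v), ← Finset.sum_mul, hker u, zero_mul]
    rw [Matrix.trace]
    simp [Matrix.diag, hdiag0]
  -- rank of QM
  have hQMrank : QM.rank = 1 := by
    have hle : QM.rank ≤ 1 := by
      set W : Matrix G.V (Fin 1) ℝ := Matrix.of (fun u _ => qv u) with hW
      have hfac : QM = W * W.transpose := by
        ext u v
        rw [Matrix.mul_apply, Fin.sum_univ_one, hQM]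
        rfl
      have h1 : QM.rank ≤ W.rank := by rw [hfac]; exact Matrix.rank_mul_le_left W W.transpose
      have h2 : W.rank ≤ Fintype.card (Fin 1) := Matrix.rank_le_card_width W
      simpa using le_trans h1 h2
    have hge : 1 ≤ QM.rank := by
      set w : Fin 1 → (G.V → ℝ) := ![QM.mulVec (Pi.single (vtx 0) 1)] with hw
      have hmem : ∀ i, w i ∈ LinearMap.range QM.mulVecLin := by
        intro i; fin_cases i
        exact ⟨Pi.single (vtx 0) 1, rfl⟩
      have hli : LinearIndependent ℝ w := by
        rw [linearIndependent_unique_iff]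
        show QM.mulVec (Pi.single (vtx 0) 1) ≠ 0
        rw [Matrix.mulVec_single_one]
        intro hcontra
        have h := congrFun hcontra (vtx 0)
        simp only [Pi.zero_apply, Matrix.col_apply, mul_one] at h
        rw [hQM, hqv] at h
        exact hQne 0 (by nlinarith [h])
      exact rank_ge_of_li QM w hmem hli
    omega
  -- sign conditions
  have hτmul : ∀ i : Fin 3, τ (i + 1) * τ (i + 1 + 1) = -τ i := by
    intro i
    rcases hfin3 i with rfl | rfl | rfl
    · show τ 1 * τ 2 = -τ 0
      linear_combination τ 0 * hodd' - τ 1 * τ 2 * (hτsq 0)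
    · show τ 2 * τ 0 = -τ 1
      linear_combination τ 1 * hodd' - τ 2 * τ 0 * (hτsq 1)
    · show τ 0 * τ 1 = -τ 2
      linear_combination τ 2 * hodd' - τ 0 * τ 1 * (hτsq 2)
  have hωE2 : ∀ i : Fin 3, ωE (edge i)
      = 2 * (τ (i + 1) * τ (i + 1 + 1)) * (Real.sin (A (i + 1)) * Real.sin (A (i + 1 + 1))) := by
    intro i
    rw [hωE i, hwEval i, hQdef]; simp only
    rw [hsind, hsind]; ring
  have hωE3 : ∀ i : Fin 3, ωE (edge i)
      = -τ i * (2 * (Real.sin (A (i + 1)) * Real.sin (A (i + 1 + 1)))) := by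
    intro i; rw [hωE2 i, hτmul i]; ring
  have hsinpos : ∀ i : Fin 3, 0 < Real.sin (A (i + 1)) * Real.sin (A (i + 1 + 1)) :=
    fun i => mul_pos (hsinA _) (hsinA _)
  have hsign_even : ∀ e, ¬ G.odd e → ωE e ≤ 0 := by
    intro e he
    obtain ⟨i, rfl⟩ := ebij.2 e
    rw [hωE3 i, (hτval i).2 he]
    have := hsinpos i
    nlinarith
  have hsign_odd : ∀ e, G.odd e → 0 ≤ ωE e := by
    intro e he
    obtain ⟨i, rfl⟩ := ebij.2 e
    rw [hωE3 i, (hτval i).1 he]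
    have := hsinpos i
    nlinarith
  have hnonzero : ∀ e, ωE e ≠ 0 := by
    intro e
    obtain ⟨i, rfl⟩ := ebij.2 e
    rw [hωE i, hwEval i]
    exact mul_ne_zero (mul_ne_zero two_ne_zero (hQne i)) (hQne (i + 1))
  -- assembly
  have hmaxrank : IsMaxRankSol G c X₀ :=
    ⟨hfeas₀, fun Y hY => le_of_eq (by rw [huniq Y hY])⟩
  have hdualsol : IsDualSol G ωV ωE := by
    refine ⟨hsign_even, hsign_odd, ?_⟩
    rw [hΩeq]; exact hQMpsd
  have hstrict : StrictComp G c X₀ ωV ωE := by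
    refine ⟨by rw [hΩeq]; exact htr, ?_, ?_⟩
    · intro e _ u v hends
      rw [hval₀ e u v hends, sub_self, zero_mul]
    · rw [hΩeq, hrank₀, hQMrank, hV]
  exact ⟨⟨X₀, hfeas₀, huniq⟩,
    fun X hX => by rw [huniq X hX]; exact hrank₀,
    ωV, ωE, ⟨hdualsol, X₀, hmaxrank, hstrict⟩, hnonzero⟩

/-- Lemma 4.1. If `G` is isomorphic to `K₃`, `c` is nondegenerate
and the triangle is an odd tight cycle, then `P(G,Σ,c)` has a unique solution of
rank exactly two, and there is a nice dual solution supported on strictly tight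
edges which is nonzero on every edge. -/
theorem stmt4_tight_triangle
    (G : SignedGraph) (c : G.E → ℝ) (hc : ∀ e, c e ∈ Set.Icc (-1 : ℝ) 1)
    (hnd : G.NondegWeights c)
    (hV : Fintype.card G.V = 3) (hE : Fintype.card G.E = 3)
    (hloopless : ∀ e, ¬ (G.ends e).IsDiag) (hinj : Function.Injective G.ends)
    (C : GCycle G) (hlen : C.len = 3) (htight : IsTight G c C) :
    (∃! X, IsFeasible G c X) ∧ (∀ X, IsFeasible G c X → X.rank = 2) ∧
    ∃ (ωV : G.V → ℝ) (ωE : G.E → ℝ), IsNiceDual G c ωV ωE ∧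
      (∀ e, ¬ StrictlyTight G c e → ωE e = 0) ∧ (∀ e, ωE e ≠ 0) := by
  classical
  obtain ⟨k, vtx, edge, vinj, einj, incid⟩ := C
  have hk : k = 2 := by
    have h : k + 1 = 3 := hlen
    omega
  subst hk
  have vbij : Function.Bijective vtx :=
    (Fintype.bijective_iff_injective_and_card vtx).2 ⟨vinj, by simp [hV]⟩
  have ebij : Function.Bijective edge :=
    (Fintype.bijective_iff_injective_and_card edge).2 ⟨einj, by simp [hE]⟩
  have hoddC : Odd (GCycle.oddCount ⟨2, vtx, edge, vinj, einj, incid⟩) := htight.1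
  have hvalC : (GCycle.val ⟨2, vtx, edge, vinj, einj, incid⟩ (G.metric c)) = 1 := htight.2
  -- numeric tightness
  rw [GCycle.val] at hvalC
  rw [Fin.sum_univ_three] at hvalC
  simp only [SignedGraph.metric] at hvalC
  have pi_pos := Real.pi_pos
  have harc : ∀ i : Fin 3, Real.arccos ((if G.odd (edge i) then (-1:ℝ) else 1) * c (edge i))
      = Real.pi * (if G.odd (edge i) then 1 - Real.arccos (c (edge i)) / Real.pi
        else Real.arccos (c (edge i)) / Real.pi) := by
    intro i
    by_cases h : G.odd (edge i)
    · rw [if_pos h, if_pos h, neg_one_mul, Real.arccos_neg]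
      field_simp
    · rw [if_neg h, if_neg h, one_mul]
      field_simp
  have htightnum : Real.arccos ((if G.odd (edge 0) then (-1:ℝ) else 1) * c (edge 0))
      + Real.arccos ((if G.odd (edge 1) then (-1:ℝ) else 1) * c (edge 1))
      + Real.arccos ((if G.odd (edge 2) then (-1:ℝ) else 1) * c (edge 2)) = Real.pi := by
    rw [harc 0, harc 1, harc 2, ← mul_add, ← mul_add, hvalC, mul_one]
  -- numeric parity
  have hcard : Nat.card {i : Fin 3 // G.odd (edge i)}
      = (Finset.univ.filter (fun i : Fin 3 => G.odd (edge i))).card := by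
    rw [Nat.card_eq_fintype_card, Fintype.card_subtype]
  have hpow : ((-1:ℝ))^((Finset.univ.filter (fun i : Fin 3 => G.odd (edge i))).card) = -1 := by
    rw [← hcard]
    exact Odd.neg_one_pow hoddC
  have hprod : (∏ i : Fin 3, if G.odd (edge i) then (-1:ℝ) else 1) = -1 := by
    rw [Finset.prod_ite]
    simp only [Finset.prod_const, one_pow, mul_one]
    exact hpow
  rw [Fin.prod_univ_three] at hprod
  obtain ⟨h1, h2, ωV, ωE, hnice, hnz⟩ :=
    main_aux G c hc hnd hV vtx edge vbij ebij incid hprod htightnum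
  refine ⟨h1, h2, ωV, ωE, hnice, ?_, hnz⟩
  intro e hns
  exfalso
  apply hns
  obtain ⟨i, rfl⟩ := ebij.2 e
  exact ⟨⟨2, vtx, edge, vinj, einj, incid⟩, htight, by norm_num [GCycle.len], ⟨i, rfl⟩⟩
end

section
/- Let (G,Σ) be a signed graph and c ∈ [−1,1]^E with arccos(c)/π ∈ MET(G,Σ). Let C₁ and C₂ be two distinct tight odd cycles with |V(C₁) ∩ V(C₂)| ≥ 2, let u, v be two distinct vertices in V(C₁) ∩ V(C₂), and for i = 1, 2 decompose C_i into two u–v paths P_i¹ and P_i². If P₁¹ is internally disjoint from C₂, then either P₁¹ ∪ P₂¹ or P₁¹ ∪ P₂² is a tight odd cycle. -/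
/-! ## Auxiliary machinery for Statement 9 -/

namespace Stmt9Aux

open Finset

variable {G : SignedGraph}

open Classical in
/-- `f(e) = x(e)` for even edges, `1 - x(e)` for odd ones. -/
noncomputable def fE (G : SignedGraph) (x : G.E → ℝ) (e : G.E) : ℝ :=
  if G.odd e then 1 - x e else x e

open Classical in
/-- Indicator of odd edges. -/
noncomputable def nE (G : SignedGraph) (e : G.E) : ℕ :=
  if G.odd e then 1 else 0

open Classical in
lemma natCard_eq_sum {m : ℕ} (p : Fin m → Prop) :
    Nat.card {i // p i} = ∑ i, if p i then 1 else 0 := by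
  rw [Nat.card_eq_fintype_card, Fintype.card_subtype, Finset.card_filter]

lemma coc (C : GCycle G) : C.oddCount = ∑ i, nE G (C.edge i) := by
  have h := natCard_eq_sum (fun i : Fin (C.k + 1) => G.odd (C.edge i))
  unfold GCycle.oddCount
  rw [h]
  rfl

lemma cval (C : GCycle G) (x : G.E → ℝ) : C.val x = ∑ i, fE G x (C.edge i) := rfl

open Classical in
lemma fE_eq (x : G.E → ℝ) (e : G.E) : fE G x e = (nE G e : ℝ) + G.sgn e * x e := by
  unfold fE nE SignedGraph.sgn
  split_ifs <;> push_cast <;> ring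

lemma fE_nonneg {x : G.E → ℝ} (hx : ∀ e, x e ∈ Set.Icc (0:ℝ) 1) (e : G.E) :
    0 ≤ fE G x e := by
  have h := hx e
  simp only [Set.mem_Icc] at h
  unfold fE
  split_ifs <;> linarith [h.1, h.2]

/-- MET inequality: every odd cycle has `val ≥ 1`. -/
lemma one_le_val {x : G.E → ℝ} (hmet : InMET G x) {C : GCycle G} (hC : C.IsOdd) :
    (1 : ℝ) ≤ C.val x := by
  have h := hmet.2 C hC
  have h2 : C.val x
      = (∑ i, (nE G (C.edge i) : ℝ)) + ∑ i, G.sgn (C.edge i) * x (C.edge i) := by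
    rw [cval, ← Finset.sum_add_distrib]
    exact Finset.sum_congr rfl fun i _ => fE_eq x _
  have h3 : (C.oddCount : ℝ) = ∑ i, (nE G (C.edge i) : ℝ) := by
    rw [coc]
    push_cast
    rfl
  rw [h2, ← h3]
  linarith

/-- Splitting a sum over an injective family whose range is a disjoint union. -/
lemma sum_split {E : Type} [Fintype E] [DecidableEq E] {M : Type} [AddCommMonoid M]
    {m₁ m₂ m₃ : ℕ} {fa : Fin m₁ → E} {fb : Fin m₂ → E} {fc : Fin m₃ → E}
    (ha : Function.Injective fa) (hb : Function.Injective fb)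
    (hc : Function.Injective fc)
    (hd : Disjoint (Set.range fa) (Set.range fb))
    (hu : Set.range fa ∪ Set.range fb = Set.range fc) (g : E → M) :
    ∑ i, g (fc i) = (∑ i, g (fa i)) + ∑ i, g (fb i) := by
  rw [← Finset.sum_image (s := Finset.univ) (g := fc) (f := g)
        (fun x _ y _ h => hc h),
      ← Finset.sum_image (s := Finset.univ) (g := fa) (f := g)
        (fun x _ y _ h => ha h),
      ← Finset.sum_image (s := Finset.univ) (g := fb) (f := g)
        (fun x _ y _ h => hb h)]
  have himg : Finset.univ.image fc = Finset.univ.image fa ∪ Finset.univ.image fb := by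
    apply Finset.coe_injective
    rw [Finset.coe_union]
    simp only [Finset.coe_image, Finset.coe_univ, Set.image_univ]
    exact hu.symm
  have hdisj : Disjoint (Finset.univ.image fa) (Finset.univ.image fb) := by
    rw [← Finset.disjoint_coe]
    simpa [Set.image_univ] using hd
  rw [himg, Finset.sum_union hdisj]

/-- Surgery: splitting a sum `range n` at a segment `[a, b)`. -/
lemma sum_surgery {M : Type} [AddCommMonoid M] (g : ℕ → M) (a b n : ℕ)
    (hab : a < b) (hbn : b ≤ n) :
    ∑ i ∈ Finset.range n, g i
      = (∑ i ∈ Finset.range (b - a), g (a + i))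
        + ∑ i ∈ Finset.range (n - (b - a)),
            (if i < a then g i else g (i + (b - a))) := by
  have h1 : ∑ i ∈ Finset.range (b - a), g (a + i) = ∑ i ∈ Finset.Ico a b, g i :=
    (Finset.sum_Ico_eq_sum_range g a b).symm
  have h2 : ∑ i ∈ Finset.range (n - (b - a)),
        (if i < a then g i else g (i + (b - a)))
      = (∑ i ∈ Finset.Ico 0 a, g i) + ∑ i ∈ Finset.Ico b n, g i := by
    have ha' : a ≤ n - (b - a) := by omega
    rw [Finset.range_eq_Ico, ← Finset.sum_Ico_consecutive _ (Nat.zero_le a) ha']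
    congr 1
    · exact Finset.sum_congr rfl fun i hi => by
        rw [if_pos (Finset.mem_Ico.mp hi).2]
    · rw [Finset.sum_Ico_eq_sum_range]
      rw [show ∑ i ∈ Finset.Ico b n, g i = ∑ i ∈ Finset.range (n - b), g (b + i) from
        Finset.sum_Ico_eq_sum_range g b n]
      rw [show n - (b - a) - a = n - b by omega]
      exact Finset.sum_congr rfl fun i _ => by
        rw [if_neg (by omega)]
        congr 1
        omega
  rw [h1, h2, Finset.range_eq_Ico,
      ← Finset.sum_Ico_consecutive g (Nat.zero_le b) hbn,
      ← Finset.sum_Ico_consecutive g (Nat.zero_le a) (le_of_lt hab)]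
  abel

/-- A closed walk in a signed graph, indexed by naturals. -/
structure CW (G : SignedGraph) where
  n : ℕ
  v : ℕ → G.V
  e : ℕ → G.E
  closed : v n = v 0
  incid : ∀ i < n, G.ends (e i) = s(v i, v (i + 1))

noncomputable def CW.val (W : CW G) (x : G.E → ℝ) : ℝ :=
  ∑ i ∈ Finset.range W.n, fE G x (W.e i)

noncomputable def CW.num (W : CW G) : ℕ :=
  ∑ i ∈ Finset.range W.n, nE G (W.e i)

/-- A closed walk with no repeated vertices or edges is a cycle. -/
def CW.toCycle (W : CW G) (k : ℕ) (hk : W.n = k + 1)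
    (hv : ∀ i j, i < j → j < W.n → W.v i ≠ W.v j)
    (he : ∀ i j, i < j → j < W.n → W.e i ≠ W.e j) : GCycle G where
  k := k
  vtx i := W.v i.val
  edge i := W.e i.val
  vtx_inj := by
    intro i j h
    rcases Nat.lt_trichotomy i.val j.val with hlt | heq | hgt
    · exact absurd h (hv _ _ hlt (by omega))
    · exact Fin.ext heq
    · exact absurd h.symm (hv _ _ hgt (by omega))
  edge_inj := by
    intro i j h
    rcases Nat.lt_trichotomy i.val j.val with hlt | heq | hgt
    · exact absurd h (he _ _ hlt (by omega))
    · exact Fin.ext heq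
    · exact absurd h.symm (he _ _ hgt (by omega))
  incid := by
    intro i
    have hi : i.val < W.n := by omega
    have h := W.incid i.val hi
    by_cases hl : i = Fin.last k
    · have h1 : ((i + 1 : Fin (k + 1)) : ℕ) = 0 := by
        rw [Fin.val_add_one, if_pos hl]
      have h2 : W.v (i.val + 1) = W.v 0 := by
        have hval : i.val + 1 = W.n := by
          rw [hk, hl, Fin.val_last]
        rw [hval, W.closed]
      show G.ends (W.e i.val) = s(W.v i.val, W.v ((i + 1 : Fin (k + 1)) : ℕ))
      rw [h1, ← h2]
      exact h
    · have h1 : ((i + 1 : Fin (k + 1)) : ℕ) = i.val + 1 := by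
        rw [Fin.val_add_one, if_neg hl]
      show G.ends (W.e i.val) = s(W.v i.val, W.v ((i + 1 : Fin (k + 1)) : ℕ))
      rw [h1]
      exact h

lemma toCycle_sum {M : Type} [AddCommMonoid M] (W : CW G) (k : ℕ) (hk : W.n = k + 1)
    (hv : ∀ i j, i < j → j < W.n → W.v i ≠ W.v j)
    (he : ∀ i j, i < j → j < W.n → W.e i ≠ W.e j) (g : G.E → M) :
    ∑ i, g ((W.toCycle k hk hv he).edge i) = ∑ i ∈ Finset.range W.n, g (W.e i) := by
  show ∑ i : Fin (k + 1), g (W.e i.val) = _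
  rw [hk]
  exact Fin.sum_univ_eq_sum_range (fun i => g (W.e i)) (k + 1)

/-- Key walk lemma: any odd closed walk has value at least `1`. -/
lemma cw_ge {x : G.E → ℝ} (hmet : InMET G x) :
    ∀ n (W : CW G), W.n = n → Odd W.num → 1 ≤ W.val x := by
  intro n
  induction n using Nat.strong_induction_on with
  | _ n IH =>
  intro W hWn hodd
  subst hWn
  by_cases hrep : ∃ a b : ℕ, a < b ∧ b ≤ W.n ∧ ¬(a = 0 ∧ b = W.n) ∧ W.v a = W.v b
  · obtain ⟨a, b, hab, hbn, hO, hvab⟩ := hrep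
    set d := b - a with hd
    let W₁ : CW G :=
      { n := d
        v := fun i => W.v (a + i)
        e := fun i => W.e (a + i)
        closed := by
          show W.v (a + d) = W.v (a + 0)
          rw [show a + d = b by omega, add_zero]
          exact hvab.symm
        incid := by
          intro i hi
          have h := W.incid (a + i) (by omega)
          show G.ends (W.e (a + i)) = s(W.v (a + i), W.v (a + (i + 1)))
          rw [show a + (i + 1) = a + i + 1 by omega]
          exact h }
    let W₂ : CW G :=
      { n := W.n - d
        v := fun i => if i ≤ a then W.v i else W.v (i + d)
        e := fun i => if i < a then W.e i else W.e (i + d)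
        closed := by
          show (if W.n - d ≤ a then W.v (W.n - d) else W.v (W.n - d + d))
              = (if 0 ≤ a then W.v 0 else W.v (0 + d))
          rw [if_pos (Nat.zero_le a)]
          by_cases hc : W.n - d ≤ a
          · rw [if_pos hc]
            have h1 : W.n - d = a := by omega
            have h2 : b = W.n := by omega
            rw [h1, hvab, h2, W.closed]
          · rw [if_neg hc, show W.n - d + d = W.n by omega, W.closed]
        incid := by
          intro i hi
          show G.ends (if i < a then W.e i else W.e (i + d))
              = s(if i ≤ a then W.v i else W.v (i + d),
                  if i + 1 ≤ a then W.v (i + 1) else W.v (i + 1 + d))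
          rcases lt_trichotomy i a with h | h | h
          · rw [if_pos h, if_pos (by omega : i ≤ a), if_pos (by omega : i + 1 ≤ a)]
            exact W.incid i (by omega)
          · subst h
            rw [if_neg (lt_irrefl i), if_pos (le_refl i),
                if_neg (by omega : ¬ i + 1 ≤ i)]
            have hb : b < W.n := by omega
            have h2 := W.incid b hb
            rw [show i + d = b by omega, show i + 1 + d = b + 1 by omega, hvab]
            exact h2
          · rw [if_neg (by omega : ¬ i < a), if_neg (by omega : ¬ i ≤ a),
                if_neg (by omega : ¬ i + 1 ≤ a)]
            have h2 := W.incid (i + d) (by omega)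
            rw [show i + 1 + d = i + d + 1 by omega]
            exact h2 }
    have hval : W.val x = W₁.val x + W₂.val x := by
      show (∑ i ∈ Finset.range W.n, fE G x (W.e i))
        = (∑ i ∈ Finset.range d, fE G x (W.e (a + i)))
          + ∑ i ∈ Finset.range (W.n - d),
              fE G x (if i < a then W.e i else W.e (i + d))
      rw [sum_surgery (fun i => fE G x (W.e i)) a b W.n hab hbn]
      congr 1
      exact Finset.sum_congr rfl fun i _ => (apply_ite (fE G x) _ _ _).symm
    have hnum : W.num = W₁.num + W₂.num := by
      show (∑ i ∈ Finset.range W.n, nE G (W.e i))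
        = (∑ i ∈ Finset.range d, nE G (W.e (a + i)))
          + ∑ i ∈ Finset.range (W.n - d),
              nE G (if i < a then W.e i else W.e (i + d))
      rw [sum_surgery (fun i => nE G (W.e i)) a b W.n hab hbn]
      congr 1
      exact Finset.sum_congr rfl fun i _ => (apply_ite (nE G) _ _ _).symm
    have hv1 : 0 ≤ W₁.val x := Finset.sum_nonneg fun i _ => fE_nonneg hmet.1 _
    have hv2 : 0 ≤ W₂.val x := Finset.sum_nonneg fun i _ => fE_nonneg hmet.1 _
    rw [hnum] at hodd
    rcases Nat.even_or_odd W₁.num with h1 | h1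
    · have h2 : Odd W₂.num := by
        rw [Nat.odd_iff] at hodd ⊢
        rw [Nat.even_iff] at h1
        omega
      have hlt : W.n - d < W.n := by omega
      have := IH _ hlt W₂ rfl h2
      linarith
    · have hlt : d < W.n := by omega
      have := IH _ hlt W₁ rfl h1
      linarith
  · push_neg at hrep
    have hn0 : W.n ≠ 0 := by
      intro h0
      have hz : W.num = 0 := by
        unfold CW.num
        rw [h0]
        simp
      rw [hz] at hodd
      simp at hodd
    obtain ⟨k, hk⟩ : ∃ k, W.n = k + 1 := ⟨W.n - 1, by omega⟩
    have hv' : ∀ i j, i < j → j < W.n → W.v i ≠ W.v j := fun i j hij hj =>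
      hrep i j hij (by omega) (by omega)
    have he' : ∀ i j, i < j → j < W.n → W.e i ≠ W.e j := by
      intro i j hij hj heq
      have hi := W.incid i (by omega)
      have hjinc := W.incid j hj
      rw [heq, hjinc] at hi
      rw [Sym2.eq_iff] at hi
      rcases hi with ⟨h1, h2⟩ | ⟨h1, h2⟩
      · exact hv' i j hij hj h1.symm
      · by_cases hj1 : j + 1 < W.n
        · exact hv' i (j + 1) (by omega) hj1 h2.symm
        · have hjn : j + 1 = W.n := by omega
          have h0i : W.v 0 = W.v i := by
            rw [← W.closed, ← hjn]
            exact h2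
          by_cases hi0 : i = 0
          · subst hi0
            by_cases h1j : 1 < j
            · exact hv' 1 j h1j hj h1.symm
            · have hj1' : j = 1 := by omega
              have hn2 : W.n = 2 := by omega
              have h2num : W.num = 2 * nE G (W.e 0) := by
                unfold CW.num
                rw [hn2, Finset.sum_range_succ, Finset.sum_range_succ,
                    Finset.sum_range_zero]
                rw [hj1'] at heq
                rw [← heq]
                ring
              rw [h2num, Nat.odd_iff] at hodd
              omega
          · exact hv' 0 i (Nat.pos_of_ne_zero hi0) (by omega) h0i
    have hCodd : (W.toCycle k hk hv' he').IsOdd := by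
      show Odd (W.toCycle k hk hv' he').oddCount
      rw [coc, toCycle_sum]
      exact hodd
    have hle := one_le_val hmet hCodd
    rw [cval, toCycle_sum] at hle
    exact hle

/-! ### Concatenating two `u`-`v` paths into a closed walk -/

noncomputable def pv (P : GPath G) (i : ℕ) : G.V :=
  if h : i ≤ P.len then P.vtx ⟨i, Nat.lt_succ_of_le h⟩ else P.vtx 0

noncomputable def pe (P : GPath G) (hP : 0 < P.len) (i : ℕ) : G.E :=
  if h : i < P.len then P.edge ⟨i, h⟩ else P.edge ⟨0, hP⟩

lemma pv_eq (P : GPath G) {i : ℕ} (h : i ≤ P.len) :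
    pv P i = P.vtx ⟨i, Nat.lt_succ_of_le h⟩ := dif_pos h

lemma pe_eq (P : GPath G) (hP : 0 < P.len) {i : ℕ} (h : i < P.len) :
    pe P hP i = P.edge ⟨i, h⟩ := dif_pos h

noncomputable def cv (P Q : GPath G) (i : ℕ) : G.V :=
  if i ≤ P.len then pv P i else pv Q (P.len + Q.len - i)

noncomputable def ce (P Q : GPath G) (hP : 0 < P.len) (hQ : 0 < Q.len) (i : ℕ) : G.E :=
  if i < P.len then pe P hP i else pe Q hQ (P.len + Q.len - 1 - i)

lemma cv_le (P Q : GPath G) {i : ℕ} (hi : i ≤ P.len) :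
    cv P Q i = P.vtx ⟨i, Nat.lt_succ_of_le hi⟩ := by
  unfold cv
  rw [if_pos hi, pv_eq P hi]

lemma cv_ge (P Q : GPath G)
    (h1 : P.vtx (Fin.last P.len) = Q.vtx (Fin.last Q.len))
    {i : ℕ} (hi1 : P.len ≤ i) (hi2 : i ≤ P.len + Q.len) :
    cv P Q i = Q.vtx ⟨P.len + Q.len - i, by omega⟩ := by
  by_cases hip : i ≤ P.len
  · have hie : i = P.len := le_antisymm hip hi1
    rw [cv_le P Q hip]
    have e1 : (⟨i, Nat.lt_succ_of_le hip⟩ : Fin (P.len + 1)) = Fin.last P.len := by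
      ext
      simp [hie]
    have e2 : (⟨P.len + Q.len - i, by omega⟩ : Fin (Q.len + 1)) = Fin.last Q.len := by
      ext
      simp
      omega
    rw [e1, e2, h1]
  · unfold cv
    rw [if_neg hip, pv_eq Q (by omega : P.len + Q.len - i ≤ Q.len)]

lemma ce_lt (P Q : GPath G) (hP : 0 < P.len) (hQ : 0 < Q.len) {i : ℕ} (hi : i < P.len) :
    ce P Q hP hQ i = P.edge ⟨i, hi⟩ := by
  unfold ce
  rw [if_pos hi, pe_eq P hP hi]

lemma ce_ge (P Q : GPath G) (hP : 0 < P.len) (hQ : 0 < Q.len) {i : ℕ}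
    (hi1 : P.len ≤ i) (hi2 : i < P.len + Q.len) :
    ce P Q hP hQ i = Q.edge ⟨P.len + Q.len - 1 - i, by omega⟩ := by
  unfold ce
  rw [if_neg (by omega), pe_eq Q hQ (by omega : P.len + Q.len - 1 - i < Q.len)]

/-- The closed walk obtained by following `P` from `u` to `v` and then `Q`
backwards from `v` to `u`. -/
noncomputable def concat (P Q : GPath G) (hP : 0 < P.len) (hQ : 0 < Q.len)
    (h0 : P.vtx 0 = Q.vtx 0)
    (h1 : P.vtx (Fin.last P.len) = Q.vtx (Fin.last Q.len)) : CW G where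
  n := P.len + Q.len
  v := cv P Q
  e := ce P Q hP hQ
  closed := by
    rw [cv_ge P Q h1 (by omega) (le_refl _), cv_le P Q (Nat.zero_le _)]
    have e1 : (⟨P.len + Q.len - (P.len + Q.len), by omega⟩ : Fin (Q.len + 1)) = 0 := by
      ext
      simp
    have e2 : (⟨0, Nat.lt_succ_of_le (Nat.zero_le _)⟩ : Fin (P.len + 1)) = 0 := by
      ext
      simp
    rw [e1, e2, h0]
  incid := by
    intro i hi
    by_cases hiP : i < P.len
    · rw [ce_lt P Q hP hQ hiP, cv_le P Q (le_of_lt hiP), cv_le P Q (by omega)]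
      exact P.incid ⟨i, hiP⟩
    · have ht : P.len + Q.len - 1 - i < Q.len := by omega
      rw [ce_ge P Q hP hQ (by omega) hi,
          cv_ge P Q h1 (by omega) (by omega),
          cv_ge P Q h1 (by omega) (by omega)]
      have h2 := Q.incid ⟨P.len + Q.len - 1 - i, ht⟩
      have e1 : (⟨P.len + Q.len - i, by omega⟩ : Fin (Q.len + 1))
          = Fin.succ ⟨P.len + Q.len - 1 - i, ht⟩ := by
        ext
        simp [Fin.val_succ]
        omega
      have e2 : (⟨P.len + Q.len - (i + 1), by omega⟩ : Fin (Q.len + 1))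
          = Fin.castSucc ⟨P.len + Q.len - 1 - i, ht⟩ := by
        ext
        simp
        omega
      rw [e1, e2, h2]
      exact Sym2.eq_swap

lemma concat_sum {M : Type} [AddCommMonoid M] (P Q : GPath G)
    (hP : 0 < P.len) (hQ : 0 < Q.len) (h0 : P.vtx 0 = Q.vtx 0)
    (h1 : P.vtx (Fin.last P.len) = Q.vtx (Fin.last Q.len)) (g : G.E → M) :
    ∑ i ∈ Finset.range ((concat P Q hP hQ h0 h1).n),
        g ((concat P Q hP hQ h0 h1).e i)
      = (∑ i, g (P.edge i)) + ∑ i, g (Q.edge i) := by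
  show ∑ i ∈ Finset.range (P.len + Q.len), g (ce P Q hP hQ i) = _
  rw [Finset.sum_range_add]
  congr 1
  · rw [show (∑ i ∈ Finset.range P.len, g (ce P Q hP hQ i))
        = ∑ i ∈ Finset.range P.len, g (pe P hP i) from
      Finset.sum_congr rfl fun i hi => by
        rw [Finset.mem_range] at hi
        unfold ce
        rw [if_pos hi]]
    rw [← Fin.sum_univ_eq_sum_range (fun i => g (pe P hP i)) P.len]
    exact Finset.sum_congr rfl fun i _ => by
      show g (pe P hP i.val) = g (P.edge i)
      rw [pe_eq P hP i.isLt]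
  · rw [show (∑ i ∈ Finset.range Q.len, g (ce P Q hP hQ (P.len + i)))
        = ∑ i ∈ Finset.range Q.len, g (pe Q hQ (Q.len - 1 - i)) from
      Finset.sum_congr rfl fun i hi => by
        rw [Finset.mem_range] at hi
        unfold ce
        rw [if_neg (by omega),
          show P.len + Q.len - 1 - (P.len + i) = Q.len - 1 - i by omega]]
    rw [Finset.sum_range_reflect (fun i => g (pe Q hQ i)) Q.len,
        ← Fin.sum_univ_eq_sum_range (fun i => g (pe Q hQ i)) Q.len]
    exact Finset.sum_congr rfl fun i _ => by
      show g (pe Q hQ i.val) = g (Q.edge i)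
      rw [pe_eq Q hQ i.isLt]

/-- The key construction: two internally disjoint odd-sum `u`-`v` paths `P`, `A`
form a tight odd cycle, given the complementary paths `R`, `S`. -/
lemma key {x : G.E → ℝ} (hmet : InMET G x) (u v : G.V)
    (P A R S : GPath G)
    (hPf : P.vtx 0 = u) (hPl : P.vtx (Fin.last P.len) = v)
    (hAf : A.vtx 0 = u) (hAl : A.vtx (Fin.last A.len) = v)
    (hRf : R.vtx 0 = u) (hRl : R.vtx (Fin.last R.len) = v)
    (hSf : S.vtx 0 = u) (hSl : S.vtx (Fin.last S.len) = v)
    (hP0 : 0 < P.len) (hA0 : 0 < A.len) (hR0 : 0 < R.len) (hS0 : 0 < S.len)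
    (hsum : (∑ i, fE G x (P.edge i)) + (∑ i, fE G x (R.edge i))
        + (∑ i, fE G x (A.edge i)) + (∑ i, fE G x (S.edge i)) = 2)
    (hoddPA : Odd ((∑ i, nE G (P.edge i)) + ∑ i, nE G (A.edge i)))
    (hoddRS : Odd ((∑ i, nE G (R.edge i)) + ∑ i, nE G (S.edge i)))
    (hedis : Disjoint P.edgeSet A.edgeSet)
    (hvdis : ∀ (a : Fin (P.len + 1)) (b : Fin (A.len + 1)),
        P.vtx a = A.vtx b → P.vtx a = u ∨ P.vtx a = v) :
    ∃ D : GCycle G, D.IsOdd ∧ D.val x = 1 ∧ D.edgeSet = P.edgeSet ∪ A.edgeSet := by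
  have hPA0 : P.vtx 0 = A.vtx 0 := hPf.trans hAf.symm
  have hPA1 : P.vtx (Fin.last P.len) = A.vtx (Fin.last A.len) := hPl.trans hAl.symm
  -- Lower bound from the complementary closed walk R + S.
  have hRS : 1 ≤ (∑ i, fE G x (R.edge i)) + ∑ i, fE G x (S.edge i) := by
    set W' := concat R S hR0 hS0 (hRf.trans hSf.symm) (hRl.trans hSl.symm) with hW'
    have hnum : W'.num = (∑ i, nE G (R.edge i)) + ∑ i, nE G (S.edge i) :=
      concat_sum R S hR0 hS0 _ _ (nE G)
    have hval : W'.val x = (∑ i, fE G x (R.edge i)) + ∑ i, fE G x (S.edge i) :=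
      concat_sum R S hR0 hS0 _ _ (fE G x)
    have := cw_ge hmet W'.n W' rfl (by rw [hnum]; exact hoddRS)
    rw [hval] at this
    exact this
  -- The closed walk P + A and its injectivity.
  set W := concat P A hP0 hA0 hPA0 hPA1 with hW
  have hWn : W.n = P.len + A.len := rfl
  have hv' : ∀ i j, i < j → j < W.n → W.v i ≠ W.v j := by
    intro i j hij hj heq
    rw [hWn] at hj
    have hWv : ∀ t, W.v t = cv P A t := fun _ => rfl
    rw [hWv, hWv] at heq
    by_cases hiP : i ≤ P.len
    · by_cases hjP : j ≤ P.len
      · rw [cv_le P A hiP, cv_le P A hjP] at heq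
        have h2 : i = j := by simpa using P.vtx_inj heq
        omega
      · rw [cv_le P A hiP, cv_ge P A hPA1 (by omega) (by omega)] at heq
        rcases hvdis _ _ heq with h | h
        · have hi0 : i = 0 := by
            have := P.vtx_inj (h.trans hPf.symm)
            simpa using congrArg Fin.val this
          have hj0 : P.len + A.len - j = 0 := by
            have h3 : A.vtx ⟨P.len + A.len - j, by omega⟩ = A.vtx 0 := by
              rw [← heq, h, hAf]
            have := A.vtx_inj h3
            simpa using congrArg Fin.val this
          omega
        · have hil : i = P.len := by
            have := P.vtx_inj (h.trans hPl.symm)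
            have h4 := congrArg Fin.val this
            simpa using h4
          have hjl : P.len + A.len - j = A.len := by
            have h3 : A.vtx ⟨P.len + A.len - j, by omega⟩ = A.vtx (Fin.last A.len) := by
              rw [← heq, h, hAl]
            have h4 := congrArg Fin.val (A.vtx_inj h3)
            simpa using h4
          omega
    · rw [cv_ge P A hPA1 (by omega) (by omega),
          cv_ge P A hPA1 (by omega) (by omega)] at heq
      have h2 := congrArg Fin.val (A.vtx_inj heq)
      simp only at h2
      omega
  have he' : ∀ i j, i < j → j < W.n → W.e i ≠ W.e j := by
    intro i j hij hj heq
    rw [hWn] at hj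
    have hWe : ∀ t, W.e t = ce P A hP0 hA0 t := fun _ => rfl
    rw [hWe, hWe] at heq
    by_cases hiP : i < P.len
    · by_cases hjP : j < P.len
      · rw [ce_lt P A hP0 hA0 hiP, ce_lt P A hP0 hA0 hjP] at heq
        have h2 : i = j := by simpa using P.edge_inj heq
        omega
      · rw [ce_lt P A hP0 hA0 hiP, ce_ge P A hP0 hA0 (by omega) (by omega)] at heq
        have hmem : P.edge ⟨i, hiP⟩ ∈ P.edgeSet := ⟨_, rfl⟩
        have hmem2 : P.edge ⟨i, hiP⟩ ∈ A.edgeSet := by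
          rw [heq]
          exact ⟨_, rfl⟩
        exact Set.disjoint_left.mp hedis hmem hmem2
    · rw [ce_ge P A hP0 hA0 (by omega) (by omega),
          ce_ge P A hP0 hA0 (by omega) (by omega)] at heq
      have h2 := congrArg Fin.val (A.edge_inj heq)
      simp only at h2
      omega
  have hk : W.n = (P.len + A.len - 1) + 1 := by rw [hWn]; omega
  set D := W.toCycle (P.len + A.len - 1) hk hv' he' with hD
  have hDnum : D.oddCount = (∑ i, nE G (P.edge i)) + ∑ i, nE G (A.edge i) := by
    rw [hD, coc, toCycle_sum]
    exact concat_sum P A hP0 hA0 hPA0 hPA1 (nE G)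
  have hDval : D.val x = (∑ i, fE G x (P.edge i)) + ∑ i, fE G x (A.edge i) := by
    rw [hD, cval, toCycle_sum]
    exact concat_sum P A hP0 hA0 hPA0 hPA1 (fE G x)
  have hDodd : D.IsOdd := by
    show Odd D.oddCount
    rw [hDnum]
    exact hoddPA
  have hD1 : D.val x = 1 := by
    have hle := one_le_val hmet hDodd
    have : D.val x ≤ 1 := by
      rw [hDval]
      linarith
    linarith
  refine ⟨D, hDodd, hD1, ?_⟩
  ext e
  constructor
  · rintro ⟨i, rfl⟩
    have h5 : (i : ℕ) < P.len + A.len - 1 + 1 := i.isLt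
    have hival : i.val < P.len + A.len := by omega
    show ce P A hP0 hA0 i.val ∈ _
    by_cases hiP : i.val < P.len
    · left
      rw [ce_lt P A hP0 hA0 hiP]
      exact ⟨_, rfl⟩
    · right
      rw [ce_ge P A hP0 hA0 (by omega) hival]
      exact ⟨_, rfl⟩
  · rintro (⟨a, rfl⟩ | ⟨b, rfl⟩)
    · refine ⟨⟨a.val, ?_⟩, ?_⟩
      · show a.val < P.len + A.len - 1 + 1
        have := a.isLt
        omega
      show ce P A hP0 hA0 a.val = P.edge a
      rw [ce_lt P A hP0 hA0 a.isLt]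
    · refine ⟨⟨P.len + A.len - 1 - b.val, ?_⟩, ?_⟩
      · show P.len + A.len - 1 - b.val < P.len + A.len - 1 + 1
        omega
      show ce P A hP0 hA0 (P.len + A.len - 1 - b.val) = A.edge b
      have hb := b.isLt
      rw [ce_ge P A hP0 hA0 (by omega) (by omega)]
      congr 1
      ext
      simp
      omega

end Stmt9Aux


/-- Lemma 4.6. Let `C₁, C₂` be distinct tight odd cycles sharing
at least two vertices, `u ≠ v` common vertices, and decompose each `Cᵢ` into two
`u`-`v` paths `Pᵢ¹, Pᵢ²`. If `P₁¹` is internally disjoint from `C₂`, then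
`P₁¹ ∪ P₂¹` or `P₁¹ ∪ P₂²` is a tight odd cycle. -/
theorem stmt9_two_tight_cycles
    (G : SignedGraph) (c : G.E → ℝ) (hc : ∀ e, c e ∈ Set.Icc (-1 : ℝ) 1)
    (hmet : InMET G (G.metric c))
    (C₁ C₂ : GCycle G) (hne : C₁.edgeSet ≠ C₂.edgeSet)
    (ht₁ : IsTight G c C₁) (ht₂ : IsTight G c C₂)
    (u v : G.V) (huv : u ≠ v)
    (hu : u ∈ C₁.vertexSet ∩ C₂.vertexSet) (hv : v ∈ C₁.vertexSet ∩ C₂.vertexSet)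
    (P₁₁ P₁₂ P₂₁ P₂₂ : GPath G)
    (hdec₁ : CycleDecomp C₁ u v P₁₁ P₁₂) (hdec₂ : CycleDecomp C₂ u v P₂₁ P₂₂)
    (hint : Disjoint P₁₁.edgeSet C₂.edgeSet ∧
        ∀ w, w ∈ P₁₁.vertexSet → w ∈ C₂.vertexSet → w = u ∨ w = v) :
    (∃ D : GCycle G, IsTight G c D ∧ D.edgeSet = P₁₁.edgeSet ∪ P₂₁.edgeSet) ∨
    (∃ D : GCycle G, IsTight G c D ∧ D.edgeSet = P₁₁.edgeSet ∪ P₂₂.edgeSet) := by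
  classical
  open Stmt9Aux in
  obtain ⟨h11f, h11l, h12f, h12l, hl11, hl12, hd1, hUe1, hUv1⟩ := hdec₁
  obtain ⟨h21f, h21l, h22f, h22l, hl21, hl22, hd2, hUe2, hUv2⟩ := hdec₂
  set x := G.metric c with hx
  have hsplit1v : C₁.val x = (∑ i, fE G x (P₁₁.edge i)) + ∑ i, fE G x (P₁₂.edge i) := by
    rw [cval]
    exact sum_split P₁₁.edge_inj P₁₂.edge_inj C₁.edge_inj hd1 hUe1 (fE G x)
  have hsplit2v : C₂.val x = (∑ i, fE G x (P₂₁.edge i)) + ∑ i, fE G x (P₂₂.edge i) := by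
    rw [cval]
    exact sum_split P₂₁.edge_inj P₂₂.edge_inj C₂.edge_inj hd2 hUe2 (fE G x)
  have hoc1 : C₁.oddCount = (∑ i, nE G (P₁₁.edge i)) + ∑ i, nE G (P₁₂.edge i) := by
    rw [coc]
    exact sum_split P₁₁.edge_inj P₁₂.edge_inj C₁.edge_inj hd1 hUe1 (nE G)
  have hoc2 : C₂.oddCount = (∑ i, nE G (P₂₁.edge i)) + ∑ i, nE G (P₂₂.edge i) := by
    rw [coc]
    exact sum_split P₂₁.edge_inj P₂₂.edge_inj C₂.edge_inj hd2 hUe2 (nE G)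
  have ho1 : Odd ((∑ i, nE G (P₁₁.edge i)) + ∑ i, nE G (P₁₂.edge i)) := hoc1 ▸ ht₁.1
  have ho2 : Odd ((∑ i, nE G (P₂₁.edge i)) + ∑ i, nE G (P₂₂.edge i)) := hoc2 ▸ ht₂.1
  have hval1 : (∑ i, fE G x (P₁₁.edge i)) + ∑ i, fE G x (P₁₂.edge i) = 1 := by
    rw [← hsplit1v]
    exact ht₁.2
  have hval2 : (∑ i, fE G x (P₂₁.edge i)) + ∑ i, fE G x (P₂₂.edge i) = 1 := by
    rw [← hsplit2v]
    exact ht₂.2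
  have hsubE1 : P₂₁.edgeSet ⊆ C₂.edgeSet := hUe2 ▸ Set.subset_union_left
  have hsubE2 : P₂₂.edgeSet ⊆ C₂.edgeSet := hUe2 ▸ Set.subset_union_right
  have hsubV1 : P₂₁.vertexSet ⊆ C₂.vertexSet := hUv2 ▸ Set.subset_union_left
  have hsubV2 : P₂₂.vertexSet ⊆ C₂.vertexSet := hUv2 ▸ Set.subset_union_right
  by_cases hj : Odd ((∑ i, nE G (P₁₁.edge i)) + ∑ i, nE G (P₂₁.edge i))
  · left
    have hoddRS : Odd ((∑ i, nE G (P₁₂.edge i)) + ∑ i, nE G (P₂₂.edge i)) := by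
      rw [Nat.odd_iff] at ho1 ho2 hj ⊢
      omega
    obtain ⟨D, hDodd, hDval, hDedge⟩ :=
      key hmet u v P₁₁ P₂₁ P₁₂ P₂₂ h11f h11l h21f h21l h12f h12l h22f h22l
        hl11 hl21 hl12 hl22 (by linarith) hj hoddRS
        (Set.disjoint_of_subset_right hsubE1 hint.1)
        (by
          intro a b hab
          exact hint.2 _ ⟨a, rfl⟩ (hsubV1 (hab ▸ ⟨b, rfl⟩)))
    exact ⟨D, ⟨hDodd, hDval⟩, hDedge⟩
  · right
    have hoddPA : Odd ((∑ i, nE G (P₁₁.edge i)) + ∑ i, nE G (P₂₂.edge i)) := by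
      rw [Nat.odd_iff] at ho1 ho2 ⊢
      rw [Nat.odd_iff] at hj
      omega
    have hoddRS : Odd ((∑ i, nE G (P₁₂.edge i)) + ∑ i, nE G (P₂₁.edge i)) := by
      rw [Nat.odd_iff] at ho1 ho2 ⊢
      rw [Nat.odd_iff] at hj
      omega
    obtain ⟨D, hDodd, hDval, hDedge⟩ :=
      key hmet u v P₁₁ P₂₂ P₁₂ P₂₁ h11f h11l h22f h22l h12f h12l h21f h21l
        hl11 hl22 hl12 hl21 (by linarith) hoddPA hoddRS
        (Set.disjoint_of_subset_right hsubE2 hint.1)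
        (by
          intro a b hab
          exact hint.2 _ ⟨a, rfl⟩ (hsubV2 (hab ▸ ⟨b, rfl⟩)))
    exact ⟨D, ⟨hDodd, hDval⟩, hDedge⟩
end
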